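/- arXiv:2301.11713 — 14 statements merged into one kernel-verified Lean document; each statement's English description precedes it below -/
import Mathlib

section
/- For the cycle C_n on n vertices with n odd, DL(C_n) = (n−1)/2. -/
/-- `G` admits a `k`-dispersed labelling. -/
def HasDispersedLabelling {V : Type*} [Fintype V] (G : SimpleGraph V) (k : ℕ) : Prop :=
  ∃ φ : Fin (Fintype.card V) ≃ V,
    ∀ i j : Fin (Fintype.card V), (j : ℕ) = (i : ℕ) + 1 → k ≤ G.dist (φ i) (φ j)

/-- `DL G`: the maximum `k` such that `G` admits a `k`-dispersed labelling. -/
noncomputable def DL {V : Type*} [Fintype V] (G : SimpleGraph V) : ℕ :=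
  sSup {k | HasDispersedLabelling G k}

lemma fin_sub_val {n : ℕ} (a b : Fin n) :
    (a - b).val = if b.val ≤ a.val then a.val - b.val else a.val + n - b.val := by
  have ha := a.isLt
  have hb := b.isLt
  rw [Fin.sub_def]
  simp only
  split_ifs with hle
  · rcases Nat.eq_zero_or_pos b.val with hb0 | hb0
    · rw [hb0]
      simp [Nat.mod_eq_of_lt ha]
    · rw [Nat.mod_eq_sub_mod (by omega), Nat.mod_eq_of_lt (by omega)]
      omega
  · rw [Nat.mod_eq_of_lt (by omega)]
    omega

lemma cycle_walk_lb {n : ℕ} {u v : Fin n} (p : (SimpleGraph.cycleGraph n).Walk u v) :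
    min (v - u).val (u - v).val ≤ p.length := by
  induction p with
  | nil => simp [fin_sub_val]
  | @cons a b c h p ih =>
    rw [SimpleGraph.cycleGraph_adj'] at h
    rw [SimpleGraph.Walk.length_cons]
    have h1 := a.isLt
    have h2 := b.isLt
    have h3 := c.isLt
    rw [fin_sub_val, fin_sub_val] at h ih ⊢
    split_ifs at h ih ⊢ <;> omega

open Fin.NatCast in
lemma cycle_dist_le {n : ℕ} (hn : 2 ≤ n) (u v : Fin n) :
    (SimpleGraph.cycleGraph n).dist u v ≤ (v - u).val := by
  obtain ⟨m, rfl⟩ : ∃ m, n = m + 2 := ⟨n - 2, by omega⟩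
  suffices h : ∀ (k : ℕ) (u : Fin (m+2)),
      (SimpleGraph.cycleGraph (m+2)).dist u (u + (k : Fin (m+2))) ≤ k by
    have := h (v - u).val u
    rwa [Fin.cast_val_eq_self, show u + (v - u) = v from by abel] at this
  intro k
  induction k with
  | zero => intro u; simp
  | succ k ih =>
    intro u
    have hadj : (SimpleGraph.cycleGraph (m+2)).Adj (u + (k : Fin (m+2)))
        (u + ((k+1 : ℕ) : Fin (m+2))) := by
      rw [SimpleGraph.cycleGraph_adj']
      right
      have : (u + ((k+1 : ℕ) : Fin (m+2))) - (u + ((k : ℕ) : Fin (m+2))) = 1 := by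
        push_cast; abel
      rw [this, Fin.val_one]
    calc (SimpleGraph.cycleGraph (m+2)).dist u (u + ((k+1 : ℕ) : Fin (m+2)))
        ≤ (SimpleGraph.cycleGraph (m+2)).dist u (u + (k : Fin (m+2)))
          + (SimpleGraph.cycleGraph (m+2)).dist (u + (k : Fin (m+2)))
            (u + ((k+1 : ℕ) : Fin (m+2))) :=
          SimpleGraph.Connected.dist_triangle SimpleGraph.cycleGraph_connected
      _ ≤ k + 1 := by
          rw [SimpleGraph.dist_eq_one_iff_adj.mpr hadj]
          exact Nat.add_le_add_right (ih u) 1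

lemma step_lb {n m : ℕ} (hm : n = 2*m+1) (hm1 : 1 ≤ m) (u v : Fin n)
    (hcase : v.val = u.val + m ∨ v.val + n = u.val + m) :
    m ≤ (SimpleGraph.cycleGraph n).dist u v := by
  have hu := u.isLt
  have hv := v.isLt
  have hune : u ≠ v := by
    intro h
    rw [h] at hcase
    omega
  have hconn : (SimpleGraph.cycleGraph n).Connected := by
    obtain ⟨l, rfl⟩ : ∃ l, n = l + 1 := ⟨n - 1, by omega⟩
    exact SimpleGraph.cycleGraph_connected
  have hdpos := hconn.pos_dist_of_ne hune
  have hne0 : (SimpleGraph.cycleGraph n).dist u v ≠ 0 := by omega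
  obtain ⟨p, hp⟩ := SimpleGraph.exists_walk_of_dist_ne_zero hne0
  have hlb := cycle_walk_lb p
  rw [hp] at hlb
  have h3 := fin_sub_val v u
  have h4 := fin_sub_val u v
  split_ifs at h3 h4 <;> rcases hcase with hc | hc <;> omega

theorem DL_cycleGraph_odd (n : ℕ) (hn : 3 ≤ n) (hodd : Odd n) :
    DL (SimpleGraph.cycleGraph n) = (n - 1) / 2 := by
  obtain ⟨m, hm⟩ := hodd
  have hm1 : 1 ≤ m := by omega
  have hmn : (n - 1) / 2 = m := by omega
  rw [hmn]
  -- upper bound: distance between any two vertices is at most m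
  have hub : ∀ u v : Fin n, (SimpleGraph.cycleGraph n).dist u v ≤ m := by
    intro u v
    have h1 := cycle_dist_le (by omega) u v
    have h2 := cycle_dist_le (by omega) v u
    rw [SimpleGraph.dist_comm] at h2
    have h3 := fin_sub_val v u
    have h4 := fin_sub_val u v
    have := u.isLt
    have := v.isLt
    split_ifs at h3 h4 <;> omega
  -- the coprime step size
  have hcop : Nat.Coprime m n := by
    have := (Nat.coprime_add_mul_left_right m 1 2).mpr (Nat.coprime_one_right m)
    rwa [show 1 + m * 2 = n by omega] at this
  -- the labelling
  have key : HasDispersedLabelling (SimpleGraph.cycleGraph n) m := by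
    have hnpos : 0 < n := by omega
    set f : Fin n → Fin n := fun i => ⟨i.val * m % n, Nat.mod_lt _ hnpos⟩ with hf
    have hinj : Function.Injective f := by
      intro i j hij
      have h : i.val * m % n = j.val * m % n := congrArg Fin.val hij
      have h2 : i.val ≡ j.val [MOD n] :=
        Nat.ModEq.cancel_right_of_coprime hcop.symm h
      have := i.isLt
      have := j.isLt
      have h3 : i.val % n = j.val % n := h2
      rw [Nat.mod_eq_of_lt i.isLt, Nat.mod_eq_of_lt j.isLt] at h3
      exact Fin.ext h3
    have hbij : Function.Bijective f := Finite.injective_iff_bijective.mp hinj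
    refine ⟨(finCongr (Fintype.card_fin n)).trans (Equiv.ofBijective f hbij), ?_⟩
    intro i j hij
    simp only [Equiv.trans_apply, Equiv.ofBijective_apply]
    set i' : Fin n := finCongr (Fintype.card_fin n) i
    set j' : Fin n := finCongr (Fintype.card_fin n) j
    have hij' : j'.val = i'.val + 1 := hij
    set u := f i'
    set v := f j'
    have hu : u.val = i'.val * m % n := rfl
    have hv : v.val = (i'.val * m + m) % n := by
      show j'.val * m % n = _
      rw [hij']; ring_nf
    have hA : i'.val * m % n < n := Nat.mod_lt _ hnpos
    have hv2 : v.val = (i'.val * m % n + m) % n := by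
      rw [hv, Nat.mod_add_mod]
    have hcase : v.val = u.val + m ∨ v.val + n = u.val + m := by
      rcases Nat.lt_or_ge (i'.val * m % n + m) n with hlt | hge
      · left; rw [hv2, Nat.mod_eq_of_lt hlt, hu]
      · right
        rw [hv2, Nat.mod_eq_sub_mod hge, Nat.mod_eq_of_lt (by omega), hu]
        omega
    exact step_lb hm hm1 u v hcase
  -- combine
  have hset : {k | HasDispersedLabelling (SimpleGraph.cycleGraph n) k} ⊆ Set.Iic m := by
    intro k hk
    obtain ⟨φ, hφ⟩ := hk
    have hcard : 1 < Fintype.card (Fin n) := by simp; omega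
    have := hφ ⟨0, by omega⟩ ⟨1, hcard⟩ rfl
    exact le_trans this (hub _ _)
  apply le_antisymm
  · exact csSup_le ⟨m, key⟩ (fun k hk => hset hk)
  · exact le_csSup ⟨m, fun k hk => hset hk⟩ key
end

section
/- For the cycle C_n on n vertices with n even, DL(C_n) = (n−2)/2. -/
open SimpleGraph
open Fin.NatCast Fin.CommRing

private lemma val_sub_eq {n : ℕ} (a b : Fin n) :
    (a - b).val = if b.val ≤ a.val then a.val - b.val else n + a.val - b.val := by
  have h := Fin.coe_int_sub_eq_ite a b
  have ha := a.isLt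
  have hb := b.isLt
  split at h <;> rename_i hc <;> rw [Fin.le_iff_val_le_val] at hc <;> split <;> omega

private lemma cg_adj_succ {n : ℕ} (x : Fin (n+2)) : (cycleGraph (n+2)).Adj x (x+1) := by
  rw [cycleGraph_adj]; right; simp

private lemma cg_walk (n : ℕ) (v : Fin (n+2)) (k : ℕ) :
    ∃ p : (cycleGraph (n+2)).Walk v (v + (k : Fin (n+2))), p.length = k := by
  induction k with
  | zero => exact ⟨SimpleGraph.Walk.nil.copy rfl (by simp), by simp⟩
  | succ k ih =>
    obtain ⟨p, hp⟩ := ih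
    have h : v + ((k+1 : ℕ) : Fin (n+2)) = (v + ((k : ℕ) : Fin (n+2))) + 1 := by
      push_cast; ring
    exact ⟨(p.concat (cg_adj_succ _)).copy rfl h.symm, by simp [hp]⟩

private lemma min_le_walk {n : ℕ} {u v : Fin (n+2)} (p : (cycleGraph (n+2)).Walk u v) :
    min ((v - u).val) ((u - v).val) ≤ p.length := by
  induction p with
  | nil => simp
  | @cons u w v h p ih =>
    rw [cycleGraph_adj] at h
    have key : min ((v - u).val) ((u - v).val) ≤ min ((v - w).val) ((w - v).val) + 1 := by
      have h' : (u - w).val = 1 ∨ (w - u).val = 1 := by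
        rcases h with h | h
        · left; rw [h]; simp
        · right; rw [h]; simp
      have e1 := val_sub_eq v u
      have e2 := val_sub_eq u v
      have e3 := val_sub_eq v w
      have e4 := val_sub_eq w v
      have e5 := val_sub_eq u w
      have e6 := val_sub_eq w u
      have hu := u.isLt
      have hv := v.isLt
      have hw := w.isLt
      split_ifs at e1 e2 e3 e4 e5 e6 <;> omega
    simpa using key.trans (by omega)

private lemma cg_dist (n : ℕ) (u v : Fin (n+2)) :
    (cycleGraph (n+2)).dist u v = min ((v - u).val) ((u - v).val) := by
  apply le_antisymm
  · apply le_min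
    · obtain ⟨p, hp⟩ := cg_walk n u (v - u).val
      have h : u + (((v - u).val : ℕ) : Fin (n+2)) = v := by
        rw [Fin.cast_val_eq_self]; ring
      calc (cycleGraph (n+2)).dist u v ≤ (p.copy rfl h).length := dist_le _
        _ = (v - u).val := by simpa using hp
    · obtain ⟨p, hp⟩ := cg_walk n v (u - v).val
      have h : v + (((u - v).val : ℕ) : Fin (n+2)) = u := by
        rw [Fin.cast_val_eq_self]; ring
      calc (cycleGraph (n+2)).dist u v = (cycleGraph (n+2)).dist v u := SimpleGraph.dist_comm
        _ ≤ (p.copy rfl h).length := dist_le _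
        _ = (u - v).val := by simpa using hp
  · obtain ⟨p, hp⟩ := (cycleGraph_connected (n := n + 1)).exists_walk_length_eq_dist u v
    exact hp ▸ min_le_walk p

theorem DL_cycleGraph_even (n : ℕ) (hn : 4 ≤ n) (heven : Even n) :
    DL (SimpleGraph.cycleGraph n) = (n - 2) / 2 := by
  obtain ⟨m, hm⟩ := heven
  obtain ⟨l, rfl⟩ : ∃ l, n = l + 2 := ⟨n - 2, by omega⟩
  have hm2 : 2 ≤ m := by omega
  have hml : l + 2 = m + m := hm
  have hc : Fintype.card (Fin (l + 2)) = l + 2 := Fintype.card_fin _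
  set S := {k | HasDispersedLabelling (SimpleGraph.cycleGraph (l + 2)) k} with hS
  -- upper bound
  have hub : ∀ k ∈ S, k ≤ m - 1 := by
    intro k hk
    by_contra hlt
    push_neg at hlt
    have hmk : m ≤ k := by omega
    obtain ⟨φ, hφ⟩ := hk
    have step : ∀ u v : Fin (l + 2), m ≤ (SimpleGraph.cycleGraph (l + 2)).dist u v →
        v.val = u.val + m ∨ u.val = v.val + m := by
      intro u v hd
      rw [cg_dist] at hd
      have e1 := val_sub_eq v u
      have e2 := val_sub_eq u v
      have hu := u.isLt
      have hv := v.isLt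
      split_ifs at e1 e2 <;> omega
    have h01 := hφ ⟨0, by omega⟩ ⟨1, by omega⟩ rfl
    have h12 := hφ ⟨1, by omega⟩ ⟨2, by omega⟩ rfl
    have s1 := step _ _ (le_trans hmk h01)
    have s2 := step _ _ (le_trans hmk h12)
    have b0 := (φ ⟨0, by omega⟩).isLt
    have b1 := (φ ⟨1, by omega⟩).isLt
    have b2 := (φ ⟨2, by omega⟩).isLt
    have heq : φ ⟨2, by omega⟩ = φ ⟨0, by omega⟩ := Fin.ext (by omega)
    have := φ.injective heq
    simp [Fin.ext_iff] at this
  have hne : S.Nonempty := by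
    refine ⟨0, finCongr hc, fun i j _ => Nat.zero_le _⟩
  -- lower bound labelling
  have hmem : (m - 1) ∈ S := by
    have hbd : ∀ a : ℕ, a < l + 2 → (if a % 2 = 0 then a / 2 else m + a / 2) < l + 2 := by
      intro a ha; split_ifs <;> omega
    set f : Fin (l + 2) → Fin (l + 2) :=
      fun i => ⟨if i.val % 2 = 0 then i.val / 2 else m + i.val / 2, hbd i.val i.isLt⟩ with hf
    have hinj : Function.Injective f := by
      intro i j hij
      have h := congrArg Fin.val hij
      simp only [hf] at h
      have hi := i.isLt; have hj := j.isLt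
      apply Fin.ext
      split_ifs at h <;> omega
    have hbij : Function.Bijective f := Finite.injective_iff_bijective.mp hinj
    refine ⟨(finCongr hc).trans (Equiv.ofBijective f hbij), ?_⟩
    intro i j hij
    simp only [Equiv.trans_apply, Equiv.ofBijective_apply, finCongr_apply]
    rw [cg_dist]
    have e1 := val_sub_eq (f (Fin.cast hc j)) (f (Fin.cast hc i))
    have e2 := val_sub_eq (f (Fin.cast hc i)) (f (Fin.cast hc j))
    have v1 : (f (Fin.cast hc i)).val = if i.val % 2 = 0 then i.val / 2 else m + i.val / 2 := rfl
    have v2 : (f (Fin.cast hc j)).val = if j.val % 2 = 0 then j.val / 2 else m + j.val / 2 := rfl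
    have hi := i.isLt.trans_eq hc
    have hj := j.isLt.trans_eq hc
    split_ifs at v1 v2 e1 e2 <;> omega
  have : DL (SimpleGraph.cycleGraph (l + 2)) = m - 1 :=
    le_antisymm (csSup_le hne hub) (le_csSup ⟨m - 1, hub⟩ hmem)
  rw [this]
  omega
end

section
/- For any finite connected graph G, DL(G) ≤ r(G), where r(G) is the radius of G. -/
/-- The eccentricity of a vertex: the maximum distance to another vertex. -/
noncomputable def eccent {V : Type*} [Fintype V] (G : SimpleGraph V) (v : V) : ℕ :=
  Finset.univ.sup (fun u => G.dist v u)

/-- The radius of a graph: the minimum eccentricity of a vertex. -/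
noncomputable def graphRadius {V : Type*} [Fintype V] (G : SimpleGraph V) : ℕ :=
  sInf (Set.range (eccent G))

theorem DL_le_radius {V : Type*} [Fintype V] [Nonempty V] (G : SimpleGraph V)
    (hG : G.Connected) (hcard : 2 ≤ Fintype.card V) :
    DL G ≤ graphRadius G := by
  apply csSup_le'
  rintro k ⟨φ, hφ⟩
  -- pick a center vertex achieving the radius
  have hne : (Set.range (eccent G)).Nonempty := Set.range_nonempty _
  obtain ⟨c, hc⟩ := Nat.sInf_mem hne
  have key : ∀ u : V, G.dist c u ≤ graphRadius G := by
    intro u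
    rw [graphRadius, ← hc]
    exact Finset.le_sup (Finset.mem_univ u)
  set i := φ.symm c with hi
  have hci : φ i = c := φ.apply_symm_apply c
  rcases lt_or_ge ((i : ℕ) + 1) (Fintype.card V) with h | h
  · have := hφ i ⟨(i : ℕ) + 1, h⟩ rfl
    calc k ≤ G.dist (φ i) (φ ⟨(i : ℕ) + 1, h⟩) := this
      _ ≤ graphRadius G := by rw [hci]; exact key _
  · -- i is the last index, use i - 1
    have hipos : 1 ≤ (i : ℕ) := by
      have := i.isLt
      omega
    have hlt : (i : ℕ) - 1 < Fintype.card V := by omega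
    have := hφ ⟨(i : ℕ) - 1, hlt⟩ i (by simp; omega)
    calc k ≤ G.dist (φ ⟨(i : ℕ) - 1, hlt⟩) (φ i) := this
      _ = G.dist (φ i) (φ ⟨(i : ℕ) - 1, hlt⟩) := SimpleGraph.dist_comm ..
      _ ≤ graphRadius G := by rw [hci]; exact key _
end

section
/- For the path P_m with m edges and m+1 vertices, DL(P_m) = m/2 if m is even and (m+1)/2 if m is odd; equivalently DL(P_m) = r(P_m). -/
open SimpleGraph

lemma pathGraph_walk_dist_le {n : ℕ} (u v : Fin n) (p : (pathGraph n).Walk u v) :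
    Nat.dist u.val v.val ≤ p.length := by
  induction p with
  | nil => simp [Nat.dist]
  | cons h p ih =>
    rename_i a b c
    have h1 : Nat.dist a.val b.val = 1 := by
      rw [pathGraph_adj] at h
      simp only [Nat.dist]; omega
    have := Nat.dist.triangle_inequality a.val b.val c.val
    simp only [Walk.length_cons]
    omega

lemma pathGraph_exists_walk {n : ℕ} (d : ℕ) : ∀ (u v : Fin n), u.val + d = v.val →
    ∃ p : (pathGraph n).Walk u v, p.length = d := by
  induction d with
  | zero =>
    intro u v h; have : u = v := Fin.ext (by omega); subst this
    exact ⟨Walk.nil, rfl⟩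
  | succ d ih =>
    intro u v h
    have hlt : u.val + 1 < n := by omega
    have hadj : (pathGraph n).Adj u ⟨u.val + 1, hlt⟩ := by
      rw [pathGraph_adj]; left; rfl
    obtain ⟨p, hp⟩ := ih ⟨u.val+1, hlt⟩ v (by simp; omega)
    exact ⟨Walk.cons hadj p, by simp [hp]⟩

lemma pathGraph_dist {n : ℕ} (u v : Fin n) :
    (pathGraph n).dist u v = Nat.dist u.val v.val := by
  refine le_antisymm ?_ ?_
  · rcases le_total u.val v.val with h | h
    · obtain ⟨p, hp⟩ := pathGraph_exists_walk (v.val - u.val) u v (by omega)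
      have h2 := SimpleGraph.dist_le p
      have : Nat.dist u.val v.val = v.val - u.val := by simp only [Nat.dist]; omega
      omega
    · obtain ⟨p, hp⟩ := pathGraph_exists_walk (u.val - v.val) v u (by omega)
      have h2 := SimpleGraph.dist_le p
      rw [SimpleGraph.dist_comm]
      have h3 : Nat.dist u.val v.val = Nat.dist v.val u.val := Nat.dist_comm _ _
      have : Nat.dist v.val u.val = u.val - v.val := by simp only [Nat.dist]; omega
      omega
  · obtain ⟨p, hp⟩ := (pathGraph_preconnected n u v).exists_walk_length_eq_dist
    have := pathGraph_walk_dist_le u v p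
    omega

/-- The zigzag labelling of the path. -/
def pathLab (n : ℕ) (i : Fin n) : Fin n :=
  if i.val % 2 = 0 then ⟨(n-1)/2 - i.val/2, by have := i.isLt; omega⟩
  else ⟨n - 1 - i.val/2, by have := i.isLt; omega⟩

lemma pathLab_injective (n : ℕ) : Function.Injective (pathLab n) := by
  intro i j h
  have hi := i.isLt; have hj := j.isLt
  simp only [pathLab] at h
  split_ifs at h with h1 h2 h2 <;>
    (apply Fin.ext; simp only [Fin.mk.injEq] at h; omega)

lemma hasDL (m : ℕ) : HasDispersedLabelling (pathGraph (m+1)) ((m+1)/2) := by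
  have hbij : Function.Bijective (pathLab (m+1)) :=
    (Fintype.bijective_iff_injective_and_card _).mpr ⟨pathLab_injective _, rfl⟩
  refine ⟨(finCongr (Fintype.card_fin (m+1))).trans (Equiv.ofBijective _ hbij), ?_⟩
  intro i j hij
  have hi := i.isLt; have hj := j.isLt
  simp only [Fintype.card_fin] at hi hj
  simp only [Equiv.trans_apply, finCongr_apply, Equiv.ofBijective_apply]
  rw [pathGraph_dist]
  simp only [pathLab, Fin.coe_cast]
  split_ifs with h1 h2 h2 <;> simp only [Nat.dist] <;> omega

lemma DL_upper (m : ℕ) (hm : 1 ≤ m) (k : ℕ)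
    (h : HasDispersedLabelling (pathGraph (m+1)) k) : k ≤ (m+1)/2 := by
  obtain ⟨φ, hφ⟩ := h
  set r := (m+1)/2 with hr
  have hrm : r ≤ m := by omega
  set c : Fin (m+1) := ⟨r, by omega⟩ with hc
  set i : Fin (Fintype.card (Fin (m+1))) := φ.symm c with hi
  have hiv := i.isLt
  simp only [Fintype.card_fin] at hiv
  have hφi : φ i = c := Equiv.apply_symm_apply _ _
  by_cases hcase : i.val + 1 < m + 1
  · set j : Fin (Fintype.card (Fin (m+1))) := ⟨i.val + 1, by simpa using hcase⟩ with hj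
    have := hφ i j rfl
    rw [hφi, pathGraph_dist] at this
    have hb := (φ j).isLt
    simp only [Nat.dist] at this
    have hcv : (c : ℕ) = (m+1)/2 := rfl
    omega
  · have h1 : 1 ≤ i.val := by
      by_contra hcon
      have hi0 : i.val = 0 := by omega
      omega
    set j : Fin (Fintype.card (Fin (m+1))) := ⟨i.val - 1, by simp; omega⟩ with hj
    have := hφ j i (by simp [hj]; omega)
    rw [hφi, pathGraph_dist] at this
    have hb := (φ j).isLt
    simp only [Nat.dist] at this
    have hcv : (c : ℕ) = (m+1)/2 := rfl
    omega
lemma eccent_lower (m : ℕ) (v : Fin (m+1)) :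
    (m+1)/2 ≤ _root_.eccent (SimpleGraph.pathGraph (m+1)) v := by
  have h0 : (SimpleGraph.pathGraph (m+1)).dist v ⟨0, by omega⟩ ≤ _root_.eccent _ v :=
    Finset.le_sup (Finset.mem_univ _)
  have h1 : (SimpleGraph.pathGraph (m+1)).dist v ⟨m, by omega⟩ ≤ _root_.eccent _ v :=
    Finset.le_sup (Finset.mem_univ _)
  rw [pathGraph_dist] at h0 h1
  have := v.isLt
  simp only [Nat.dist] at h0 h1
  omega

lemma eccent_center (m : ℕ) (hm : 1 ≤ m) :
    _root_.eccent (SimpleGraph.pathGraph (m+1)) ⟨(m+1)/2, by omega⟩ = (m+1)/2 := by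
  refine le_antisymm ?_ (eccent_lower m _)
  refine Finset.sup_le fun u _ => ?_
  rw [pathGraph_dist]
  have := u.isLt
  simp only [Nat.dist]
  omega

lemma radius_path (m : ℕ) (hm : 1 ≤ m) :
    graphRadius (SimpleGraph.pathGraph (m+1)) = (m+1)/2 := by
  refine le_antisymm (Nat.sInf_le ⟨_, eccent_center m hm⟩) ?_
  refine le_csInf ⟨_, ⟨⟨(m+1)/2, by omega⟩, rfl⟩⟩ ?_
  rintro b ⟨v, rfl⟩
  exact eccent_lower m v

theorem DL_pathGraph (m : ℕ) (hm : 1 ≤ m) :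
    DL (SimpleGraph.pathGraph (m + 1)) = (if Even m then m / 2 else (m + 1) / 2) ∧
      DL (SimpleGraph.pathGraph (m + 1)) = graphRadius (SimpleGraph.pathGraph (m + 1)) := by
  have h1 : DL (SimpleGraph.pathGraph (m+1)) = (m+1)/2 :=
    le_antisymm (csSup_le ⟨_, hasDL m⟩ fun k hk => DL_upper m hm k hk)
      (le_csSup ⟨(m+1)/2, fun k hk => DL_upper m hm k hk⟩ (hasDL m))
  refine ⟨?_, by rw [h1, radius_path m hm]⟩
  rw [h1]
  split_ifs with h
  · obtain ⟨s, rfl⟩ := h; omega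
  · rfl
end

section
/- If a finite connected graph G contains three distinct central vertices, each of which is uniquely eccentric, then DL(G) ≤ r(G) − 1. -/
/-- A vertex is uniquely eccentric if exactly one vertex achieves its eccentricity. -/
def UniquelyEccentric {V : Type*} [Fintype V] (G : SimpleGraph V) (v : V) : Prop :=
  ∃! u : V, G.dist v u = eccent G v

/-- A central vertex: one whose eccentricity equals the radius. -/
def IsCentral {V : Type*} [Fintype V] (G : SimpleGraph V) (v : V) : Prop :=
  eccent G v = graphRadius G

theorem DL_le_radius_sub_one_of_three_uniquely_eccentric_central
    {V : Type*} [Fintype V] (G : SimpleGraph V) (hG : G.Connected)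
    (a b c : V) (hab : a ≠ b) (hac : a ≠ c) (hbc : b ≠ c)
    (ha : IsCentral G a ∧ UniquelyEccentric G a)
    (hb : IsCentral G b ∧ UniquelyEccentric G b)
    (hc : IsCentral G c ∧ UniquelyEccentric G c) :
    DL G ≤ graphRadius G - 1 := by
  obtain ⟨ha1, ha2⟩ := ha
  obtain ⟨hb1, hb2⟩ := hb
  obtain ⟨hc1, hc2⟩ := hc
  -- the radius is positive
  have hdistab : 0 < G.dist a b := hG.pos_dist_of_ne hab
  have hle : G.dist a b ≤ eccent G a := Finset.le_sup (Finset.mem_univ b)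
  have hr1 : 1 ≤ graphRadius G := by rw [ha1] at hle; omega
  apply csSup_le'
  rintro k ⟨φ, hφ⟩
  by_contra hk
  push_neg at hk
  have hrk : graphRadius G ≤ k := by omega
  have key : ∀ v : V, IsCentral G v → UniquelyEccentric G v →
      ((φ.symm v : ℕ) = 0 ∨ (φ.symm v : ℕ) = Fintype.card V - 1) := by
    intro v hv huE
    have hv' : eccent G v = graphRadius G := hv
    obtain ⟨u, hu, huniq⟩ := huE
    by_contra h
    push_neg at h
    obtain ⟨h0, hN⟩ := h
    have hilt : ((φ.symm v : Fin (Fintype.card V)) : ℕ) < Fintype.card V := (φ.symm v).isLt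
    have h1 : ((φ.symm v : Fin (Fintype.card V)) : ℕ) - 1 < Fintype.card V := by omega
    have h2 : ((φ.symm v : Fin (Fintype.card V)) : ℕ) + 1 < Fintype.card V := by omega
    have hφi : φ (φ.symm v) = v := φ.apply_symm_apply v
    have e1 : k ≤ G.dist (φ ⟨((φ.symm v : Fin (Fintype.card V)) : ℕ) - 1, h1⟩) v := by
      have := hφ ⟨((φ.symm v : Fin (Fintype.card V)) : ℕ) - 1, h1⟩ (φ.symm v) (by simp; omega)
      rwa [hφi] at this
    have e2 : k ≤ G.dist v (φ ⟨((φ.symm v : Fin (Fintype.card V)) : ℕ) + 1, h2⟩) := by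
      have := hφ (φ.symm v) ⟨((φ.symm v : Fin (Fintype.card V)) : ℕ) + 1, h2⟩ (by simp)
      rwa [hφi] at this
    have hub : ∀ w : V, G.dist v w ≤ graphRadius G := by
      intro w
      calc G.dist v w ≤ eccent G v := Finset.le_sup (Finset.mem_univ w)
        _ = graphRadius G := hv'
    have d1 : G.dist v (φ ⟨((φ.symm v : Fin (Fintype.card V)) : ℕ) - 1, h1⟩) = eccent G v := by
      rw [hv']
      have := hub (φ ⟨((φ.symm v : Fin (Fintype.card V)) : ℕ) - 1, h1⟩)
      rw [G.dist_comm] at e1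
      omega
    have d2 : G.dist v (φ ⟨((φ.symm v : Fin (Fintype.card V)) : ℕ) + 1, h2⟩) = eccent G v := by
      rw [hv']
      have := hub (φ ⟨((φ.symm v : Fin (Fintype.card V)) : ℕ) + 1, h2⟩)
      omega
    have q1 := huniq _ d1
    have q2 := huniq _ d2
    have heq : (⟨((φ.symm v : Fin (Fintype.card V)) : ℕ) - 1, h1⟩ : Fin (Fintype.card V))
        = ⟨((φ.symm v : Fin (Fintype.card V)) : ℕ) + 1, h2⟩ :=
      φ.injective (q1.trans q2.symm)
    simp only [Fin.mk.injEq] at heq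
    omega
  have ka := key a ha1 ha2
  have kb := key b hb1 hb2
  have kc := key c hc1 hc2
  have nab : (φ.symm a : ℕ) ≠ (φ.symm b : ℕ) := fun h => hab (φ.symm.injective (Fin.ext h))
  have nac : (φ.symm a : ℕ) ≠ (φ.symm c : ℕ) := fun h => hac (φ.symm.injective (Fin.ext h))
  have nbc : (φ.symm b : ℕ) ≠ (φ.symm c : ℕ) := fun h => hbc (φ.symm.injective (Fin.ext h))
  omega
end

section
/- If m and n are both even, with m,n ≥ 2, then DL(L_{m,n}) ≤ (m+n)/2 − 1, where L_{m,n} is the m×n grid graph. -/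
/-- The `m × n` grid graph, as the box product of two path graphs. -/
def gridGraph (m n : ℕ) : SimpleGraph (Fin m × Fin n) :=
  SimpleGraph.boxProd (SimpleGraph.pathGraph m) (SimpleGraph.pathGraph n)

/-- In a path graph, there is a walk of length `k` from `a` up to `a + k`. -/
lemma pathGraph_walk_up {m : ℕ} : ∀ (k : ℕ) (a b : Fin m), (b : ℕ) = (a : ℕ) + k →
    ∃ w : (SimpleGraph.pathGraph m).Walk a b, w.length = k := by
  intro k
  induction k with
  | zero =>
    intro a b h
    have : a = b := Fin.ext (by omega)
    subst this
    exact ⟨SimpleGraph.Walk.nil, rfl⟩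
  | succ k ih =>
    intro a b h
    have ha1 : (a : ℕ) + 1 < m := by have := b.isLt; omega
    set a' : Fin m := ⟨(a : ℕ) + 1, ha1⟩ with ha'
    have hadj : (SimpleGraph.pathGraph m).Adj a a' := by
      rw [SimpleGraph.pathGraph_adj]; left; rfl
    obtain ⟨w, hw⟩ := ih a' b (by simp [ha']; omega)
    exact ⟨SimpleGraph.Walk.cons hadj w, by simp [hw]⟩

/-- In a path graph, there is a walk of length `Nat.dist a b` between any two vertices. -/
lemma pathGraph_walk {m : ℕ} (a b : Fin m) :
    ∃ w : (SimpleGraph.pathGraph m).Walk a b, w.length = Nat.dist (a : ℕ) (b : ℕ) := by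
  rcases le_total (a : ℕ) (b : ℕ) with h | h
  · obtain ⟨w, hw⟩ := pathGraph_walk_up ((b : ℕ) - (a : ℕ)) a b (by omega)
    exact ⟨w, by rw [hw]; simp [Nat.dist]; omega⟩
  · obtain ⟨w, hw⟩ := pathGraph_walk_up ((a : ℕ) - (b : ℕ)) b a (by omega)
    exact ⟨w.reverse, by rw [SimpleGraph.Walk.length_reverse, hw]; simp [Nat.dist]; omega⟩

/-- The grid distance is at most the taxicab distance. -/
lemma grid_dist_le {m n : ℕ} (u v : Fin m × Fin n) :
    (gridGraph m n).dist u v ≤ Nat.dist (u.1 : ℕ) (v.1 : ℕ) + Nat.dist (u.2 : ℕ) (v.2 : ℕ) := by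
  obtain ⟨w1, hw1⟩ := pathGraph_walk u.1 v.1
  obtain ⟨w2, hw2⟩ := pathGraph_walk u.2 v.2
  have hle := SimpleGraph.dist_le
    ((SimpleGraph.Walk.boxProdLeft _ u.2 w1).append (SimpleGraph.Walk.boxProdRight _ v.1 w2))
  rw [SimpleGraph.Walk.length_append] at hle
  simp only [SimpleGraph.Walk.boxProdLeft, SimpleGraph.Walk.boxProdRight,
    SimpleGraph.Walk.length_map] at hle
  erw [SimpleGraph.Walk.length_map, SimpleGraph.Walk.length_map, hw1, hw2] at hle
  exact hle

theorem DL_grid_even_upper_bound (m n : ℕ) (hm : 2 ≤ m) (hn : 2 ≤ n)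
    (hme : Even m) (hne : Even n) :
    DL (gridGraph m n) ≤ (m + n) / 2 - 1 := by
  obtain ⟨p, hp⟩ := hme
  obtain ⟨q, hq⟩ := hne
  have hp1 : 1 ≤ p := by omega
  have hq1 : 1 ≤ q := by omega
  -- the cardinality
  have hcard : Fintype.card (Fin m × Fin n) = m * n := by simp
  have hN : 4 ≤ Fintype.card (Fin m × Fin n) := by
    rw [hcard]; nlinarith
  -- key: any dispersed labelling has k small
  have key : ∀ k ∈ {k | HasDispersedLabelling (gridGraph m n) k}, k ≤ (m + n) / 2 - 1 := by
    intro k hk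
    by_contra hcon
    have hkr : p + q ≤ k := by omega
    set N := Fintype.card (Fin m × Fin n) with hNdef
    obtain ⟨φ, hφ⟩ := hk
    -- uniqueness of far vertices from centers
    have huniq : ∀ c v w : Fin m × Fin n,
        ((c.1 : ℕ) = p - 1 ∨ (c.1 : ℕ) = p) → ((c.2 : ℕ) = q - 1 ∨ (c.2 : ℕ) = q) →
        p + q ≤ (gridGraph m n).dist c v → p + q ≤ (gridGraph m n).dist c w → v = w := by
      intro c v w hc1 hc2 hv hw
      have d1 := grid_dist_le c v
      have d2 := grid_dist_le c w
      have b1 := v.1.isLt; have b2 := v.2.isLt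
      have b3 := w.1.isLt; have b4 := w.2.isLt
      simp only [Nat.dist] at d1 d2
      have e1 : (v.1 : ℕ) = (w.1 : ℕ) := by omega
      have e2 : (v.2 : ℕ) = (w.2 : ℕ) := by omega
      exact Prod.ext (Fin.ext e1) (Fin.ext e2)
    -- any center's label must be an endpoint
    have hend : ∀ c : Fin m × Fin n,
        ((c.1 : ℕ) = p - 1 ∨ (c.1 : ℕ) = p) → ((c.2 : ℕ) = q - 1 ∨ (c.2 : ℕ) = q) →
        ((φ.symm c : ℕ) = 0 ∨ (φ.symm c : ℕ) = N - 1) := by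
      intro c hc1 hc2
      by_contra hmid
      push_neg at hmid
      set i : Fin N := φ.symm c with hi
      have hiN := i.isLt
      have h0 : 0 < (i : ℕ) := by omega
      have h1 : (i : ℕ) + 1 < N := by omega
      set im : Fin N := ⟨(i : ℕ) - 1, by omega⟩ with him
      set ip : Fin N := ⟨(i : ℕ) + 1, by omega⟩ with hip
      have hφi : φ i = c := by simp [hi]
      have hd1 : k ≤ (gridGraph m n).dist (φ im) (φ i) := hφ im i (by simp [him]; omega)
      have hd2 : k ≤ (gridGraph m n).dist (φ i) (φ ip) := hφ i ip (by simp [hip])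
      rw [hφi] at hd1 hd2
      rw [SimpleGraph.dist_comm] at hd1
      have heq : φ im = φ ip :=
        huniq c (φ im) (φ ip) hc1 hc2 (le_trans hkr hd1) (le_trans hkr hd2)
      have : im = ip := φ.injective heq
      simp [him, hip, Fin.ext_iff] at this
    -- three centers
    set c1 : Fin m × Fin n := (⟨p - 1, by omega⟩, ⟨q - 1, by omega⟩) with hc1
    set c2 : Fin m × Fin n := (⟨p - 1, by omega⟩, ⟨q, by omega⟩) with hc2
    set c3 : Fin m × Fin n := (⟨p, by omega⟩, ⟨q - 1, by omega⟩) with hc3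
    have e1 := hend c1 (Or.inl rfl) (Or.inl rfl)
    have e2 := hend c2 (Or.inl rfl) (Or.inr rfl)
    have e3 := hend c3 (Or.inr rfl) (Or.inl rfl)
    have ne12 : c1 ≠ c2 := by
      simp [hc1, hc2, Prod.ext_iff, Fin.ext_iff]; omega
    have ne13 : c1 ≠ c3 := by
      simp [hc1, hc3, Prod.ext_iff, Fin.ext_iff]; omega
    have ne23 : c2 ≠ c3 := by
      simp [hc2, hc3, Prod.ext_iff, Fin.ext_iff]; omega
    have f12 : (φ.symm c1 : ℕ) ≠ (φ.symm c2 : ℕ) := by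
      intro h; exact ne12 (φ.symm.injective (Fin.ext h))
    have f13 : (φ.symm c1 : ℕ) ≠ (φ.symm c3 : ℕ) := by
      intro h; exact ne13 (φ.symm.injective (Fin.ext h))
    have f23 : (φ.symm c2 : ℕ) ≠ (φ.symm c3 : ℕ) := by
      intro h; exact ne23 (φ.symm.injective (Fin.ext h))
    omega
  -- conclude via csSup_le
  have hne0 : (0 : ℕ) ∈ {k | HasDispersedLabelling (gridGraph m n) k} :=
    ⟨(Fintype.equivFin _).symm, fun _ _ _ => Nat.zero_le _⟩
  exact csSup_le ⟨0, hne0⟩ key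
end

section
/- For odd n ≥ 3, the 2×n grid graph L_{2,n} satisfies DL(L_{2,n}) = (n+1)/2, achieved by labelling the first row 2,4,...,2n and the second row n+2, n+4, ..., 2n−1, 1, 3, ..., n. -/
open SimpleGraph

lemma pathWalk (n d : ℕ) : ∀ (i j : Fin n), i.val + d = j.val →
    ∃ w : (SimpleGraph.pathGraph n).Walk i j, w.length = d := by
  induction d with
  | zero =>
    intro i j h
    have : i = j := Fin.ext (by omega)
    subst this
    exact ⟨Walk.nil, rfl⟩
  | succ d ih =>
    intro i j h
    have hi1 : i.val + 1 < n := by omega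
    set i' : Fin n := ⟨i.val + 1, hi1⟩
    have hadj : (SimpleGraph.pathGraph n).Adj i i' := by
      rw [SimpleGraph.pathGraph_adj]; left; rfl
    obtain ⟨w, hw⟩ := ih i' j (by simp [i']; omega)
    exact ⟨Walk.cons hadj w, by simp [hw]⟩

lemma pathGraph_exists_walk_s10 (n : ℕ) (i j : Fin n) :
    ∃ w : (SimpleGraph.pathGraph n).Walk i j, w.length = Nat.dist i.val j.val := by
  rcases le_total i.val j.val with h | h
  · obtain ⟨w, hw⟩ := pathWalk n (j.val - i.val) i j (by omega)
    exact ⟨w, by rw [hw, Nat.dist]; omega⟩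
  · obtain ⟨w, hw⟩ := pathWalk n (i.val - j.val) j i (by omega)
    exact ⟨w.reverse, by rw [Walk.length_reverse, hw, Nat.dist]; omega⟩

lemma grid_walk_le {m n : ℕ} {u v : Fin m × Fin n} (w : (gridGraph m n).Walk u v) :
    Nat.dist u.1.val v.1.val + Nat.dist u.2.val v.2.val ≤ w.length := by
  induction w with
  | nil => simp [Nat.dist]
  | @cons a x c hadj p ih =>
    rw [Walk.length_cons]
    have h1 := Nat.dist.triangle_inequality a.1.val x.1.val c.1.val
    have h2 := Nat.dist.triangle_inequality a.2.val x.2.val c.2.val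
    rcases (SimpleGraph.boxProd_adj.mp hadj) with ⟨h, he⟩ | ⟨h, he⟩
    · rw [SimpleGraph.pathGraph_adj] at h
      have : Nat.dist a.1.val x.1.val = 1 := by rw [Nat.dist]; omega
      have : a.2.val = x.2.val := by rw [he]
      simp [Nat.dist] at *
      omega
    · rw [SimpleGraph.pathGraph_adj] at h
      have : Nat.dist a.2.val x.2.val = 1 := by rw [Nat.dist]; omega
      have : a.1.val = x.1.val := by rw [he]
      simp [Nat.dist] at *
      omega

lemma grid_dist (m n : ℕ) (u v : Fin m × Fin n) :
    (gridGraph m n).dist u v = Nat.dist u.1.val v.1.val + Nat.dist u.2.val v.2.val := by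
  obtain ⟨w1, hw1⟩ := pathGraph_exists_walk_s10 m u.1 v.1
  obtain ⟨w2, hw2⟩ := pathGraph_exists_walk_s10 n u.2 v.2
  let a1 := (Walk.boxProdLeft (H := SimpleGraph.pathGraph n) u.2 w1)
  let a2 := (Walk.boxProdRight (SimpleGraph.pathGraph m) v.1 w2)
  let wgrid : (gridGraph m n).Walk u v := (a1.append a2).copy (by simp) (by simp)
  apply le_antisymm
  · have h := SimpleGraph.dist_le wgrid
    have hl : (a1.append a2).length = Nat.dist u.1.val v.1.val + Nat.dist u.2.val v.2.val := by
      exact (Walk.length_append a1 a2).trans (by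
        rw [show a1.length = w1.length from Walk.length_map _ _,
          show a2.length = w2.length from Walk.length_map _ _, hw1, hw2])
    exact h.trans (le_of_eq hl)
  · obtain ⟨w, hw⟩ := (wgrid.reachable).exists_walk_length_eq_dist
    rw [← hw]
    exact grid_walk_le w

lemma fin_two_cases (a : Fin 2) : a = 0 ∨ a = 1 := by
  fin_cases a
  · exact Or.inl rfl
  · exact Or.inr rfl

lemma label_cases (n : ℕ) (p : Fin 2 × Fin n) :
    ((p.1 : ℕ) = 0 ∧
      (if p.1 = (0 : Fin 2) then 2 * ((p.2 : ℕ) + 1)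
        else if (p.2 : ℕ) < (n - 1) / 2 then n + 2 + 2 * (p.2 : ℕ)
        else 2 * ((p.2 : ℕ) - (n - 1) / 2) + 1) = 2 * ((p.2 : ℕ) + 1)) ∨
    ((p.1 : ℕ) = 1 ∧ (p.2 : ℕ) < (n - 1) / 2 ∧
      (if p.1 = (0 : Fin 2) then 2 * ((p.2 : ℕ) + 1)
        else if (p.2 : ℕ) < (n - 1) / 2 then n + 2 + 2 * (p.2 : ℕ)
        else 2 * ((p.2 : ℕ) - (n - 1) / 2) + 1) = n + 2 + 2 * (p.2 : ℕ)) ∨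
    ((p.1 : ℕ) = 1 ∧ (n - 1) / 2 ≤ (p.2 : ℕ) ∧
      (if p.1 = (0 : Fin 2) then 2 * ((p.2 : ℕ) + 1)
        else if (p.2 : ℕ) < (n - 1) / 2 then n + 2 + 2 * (p.2 : ℕ)
        else 2 * ((p.2 : ℕ) - (n - 1) / 2) + 1) = 2 * ((p.2 : ℕ) - (n - 1) / 2) + 1) := by
  rcases fin_two_cases p.1 with h1 | h1
  · left
    refine ⟨by rw [h1]; rfl, by rw [h1]; simp⟩
  · rw [h1]
    by_cases h2 : (p.2 : ℕ) < (n - 1) / 2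
    · right; left
      refine ⟨rfl, h2, by simp [h2]⟩
    · right; right
      refine ⟨rfl, by omega, by simp [h2]⟩

lemma key3 (n : ℕ) (hn : 3 ≤ n) (hodd : Odd n) (u v : Fin 2 × Fin n)
    (h : (if v.1 = (0 : Fin 2) then 2 * ((v.2 : ℕ) + 1)
          else if (v.2 : ℕ) < (n - 1) / 2 then n + 2 + 2 * (v.2 : ℕ)
          else 2 * ((v.2 : ℕ) - (n - 1) / 2) + 1) =
        (if u.1 = (0 : Fin 2) then 2 * ((u.2 : ℕ) + 1)
          else if (u.2 : ℕ) < (n - 1) / 2 then n + 2 + 2 * (u.2 : ℕ)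
          else 2 * ((u.2 : ℕ) - (n - 1) / 2) + 1) + 1) :
    (n + 1) / 2 ≤ (gridGraph 2 n).dist u v := by
  obtain ⟨m, hm⟩ := hodd
  have hu := u.2.isLt
  have hv := v.2.isLt
  rw [grid_dist]
  rcases label_cases n u with ⟨ha, he⟩ | ⟨ha, hb, he⟩ | ⟨ha, hb, he⟩ <;>
    rcases label_cases n v with ⟨hc, hf⟩ | ⟨hc, hd, hf⟩ | ⟨hc, hd, hf⟩ <;>
    rw [he, hf] at h <;>
    simp only [Nat.dist] <;>
    omega

theorem DL_grid_two_rows_odd (n : ℕ) (hn : 3 ≤ n) (hodd : Odd n) :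
    (Function.Injective (fun p : Fin 2 × Fin n =>
        if p.1 = (0 : Fin 2) then 2 * ((p.2 : ℕ) + 1)
        else if (p.2 : ℕ) < (n - 1) / 2 then n + 2 + 2 * (p.2 : ℕ)
        else 2 * ((p.2 : ℕ) - (n - 1) / 2) + 1)) ∧
    (∀ p : Fin 2 × Fin n,
        1 ≤ (if p.1 = (0 : Fin 2) then 2 * ((p.2 : ℕ) + 1)
          else if (p.2 : ℕ) < (n - 1) / 2 then n + 2 + 2 * (p.2 : ℕ)
          else 2 * ((p.2 : ℕ) - (n - 1) / 2) + 1) ∧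
        (if p.1 = (0 : Fin 2) then 2 * ((p.2 : ℕ) + 1)
          else if (p.2 : ℕ) < (n - 1) / 2 then n + 2 + 2 * (p.2 : ℕ)
          else 2 * ((p.2 : ℕ) - (n - 1) / 2) + 1) ≤ 2 * n) ∧
    (∀ u v : Fin 2 × Fin n,
        (if v.1 = (0 : Fin 2) then 2 * ((v.2 : ℕ) + 1)
          else if (v.2 : ℕ) < (n - 1) / 2 then n + 2 + 2 * (v.2 : ℕ)
          else 2 * ((v.2 : ℕ) - (n - 1) / 2) + 1) =
        (if u.1 = (0 : Fin 2) then 2 * ((u.2 : ℕ) + 1)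
          else if (u.2 : ℕ) < (n - 1) / 2 then n + 2 + 2 * (u.2 : ℕ)
          else 2 * ((u.2 : ℕ) - (n - 1) / 2) + 1) + 1 →
        (n + 1) / 2 ≤ (gridGraph 2 n).dist u v) ∧
    DL (gridGraph 2 n) = (n + 1) / 2 := by
  obtain ⟨m, hm⟩ := hodd
  have hodd' : Odd n := ⟨m, hm⟩
  have hbnd : ∀ p : Fin 2 × Fin n,
      1 ≤ (if p.1 = (0 : Fin 2) then 2 * ((p.2 : ℕ) + 1)
        else if (p.2 : ℕ) < (n - 1) / 2 then n + 2 + 2 * (p.2 : ℕ)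
        else 2 * ((p.2 : ℕ) - (n - 1) / 2) + 1) ∧
      (if p.1 = (0 : Fin 2) then 2 * ((p.2 : ℕ) + 1)
        else if (p.2 : ℕ) < (n - 1) / 2 then n + 2 + 2 * (p.2 : ℕ)
        else 2 * ((p.2 : ℕ) - (n - 1) / 2) + 1) ≤ 2 * n := by
    intro p
    have hp := p.2.isLt
    split_ifs <;> omega
  have hinj : Function.Injective (fun p : Fin 2 × Fin n =>
      if p.1 = (0 : Fin 2) then 2 * ((p.2 : ℕ) + 1)
      else if (p.2 : ℕ) < (n - 1) / 2 then n + 2 + 2 * (p.2 : ℕ)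
      else 2 * ((p.2 : ℕ) - (n - 1) / 2) + 1) := by
    intro p q h
    simp only at h
    have hp := p.2.isLt
    have hq := q.2.isLt
    rcases label_cases n p with ⟨ha, he⟩ | ⟨ha, hb, he⟩ | ⟨ha, hb, he⟩ <;>
      rcases label_cases n q with ⟨hc, hf⟩ | ⟨hc, hd, hf⟩ | ⟨hc, hd, hf⟩ <;>
      rw [he, hf] at h <;>
      exact Prod.ext (Fin.ext (by omega)) (Fin.ext (by omega))
  have hcard : Fintype.card (Fin 2 × Fin n) = 2 * n := by simp
  have hmem : HasDispersedLabelling (gridGraph 2 n) ((n + 1) / 2) := by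
    let f : Fin 2 × Fin n → Fin (Fintype.card (Fin 2 × Fin n)) :=
      fun p => ⟨(if p.1 = (0 : Fin 2) then 2 * ((p.2 : ℕ) + 1)
        else if (p.2 : ℕ) < (n - 1) / 2 then n + 2 + 2 * (p.2 : ℕ)
        else 2 * ((p.2 : ℕ) - (n - 1) / 2) + 1) - 1, by
          have h1 := (hbnd p).1
          have h2 := (hbnd p).2
          omega⟩
    have hfinj : Function.Injective f := by
      intro p q hpq
      apply hinj
      have h1 := (hbnd p).1
      have h2 := (hbnd q).1
      have h3 := congrArg Fin.val hpq
      simp only [f] at h3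
      simp only
      omega
    have hfbij : Function.Bijective f :=
      (Fintype.bijective_iff_injective_and_card f).2 ⟨hfinj, by simp⟩
    let e := Equiv.ofBijective f hfbij
    refine ⟨e.symm, ?_⟩
    intro i j hij
    apply key3 n hn hodd'
    have h1' : f (e.symm i) = i := e.apply_symm_apply i
    have h2' : f (e.symm j) = j := e.apply_symm_apply j
    have h1 := congrArg Fin.val h1'
    have h2 := congrArg Fin.val h2'
    simp only [f] at h1 h2
    have b1 := (hbnd (e.symm i)).1
    have b2 := (hbnd (e.symm j)).1
    omega
  have hub : ∀ k ∈ {k | HasDispersedLabelling (gridGraph 2 n) k}, k ≤ (n + 1) / 2 := by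
    rintro k ⟨φ, hφ⟩
    have hc2 : (n - 1) / 2 < n := by omega
    set c : Fin 2 × Fin n := (0, ⟨(n - 1) / 2, hc2⟩) with hc
    have hecc : ∀ v : Fin 2 × Fin n, (gridGraph 2 n).dist c v ≤ (n + 1) / 2 := by
      intro v
      rw [grid_dist]
      have hv1 := v.1.isLt
      have hv2 := v.2.isLt
      have hc1 : (c.1 : ℕ) = 0 := rfl
      have hc2' : (c.2 : ℕ) = (n - 1) / 2 := rfl
      simp only [Nat.dist]
      omega
    set i := φ.symm c with hi
    have hic : φ i = c := φ.apply_symm_apply c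
    have hilt := i.isLt
    by_cases hlast : (i : ℕ) + 1 < Fintype.card (Fin 2 × Fin n)
    · have := hφ i ⟨(i : ℕ) + 1, hlast⟩ rfl
      rw [hic] at this
      exact this.trans (hecc _)
    · have h1 : 1 ≤ (i : ℕ) := by omega
      have hjlt : (i : ℕ) - 1 < Fintype.card (Fin 2 × Fin n) := by omega
      have := hφ ⟨(i : ℕ) - 1, hjlt⟩ i (by simp; omega)
      rw [hic, SimpleGraph.dist_comm] at this
      exact this.trans (hecc _)
  have hDL : DL (gridGraph 2 n) = (n + 1) / 2 := by
    apply le_antisymm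
    · exact csSup_le ⟨_, hmem⟩ hub
    · exact le_csSup ⟨(n + 1) / 2, fun k hk => hub k hk⟩ hmem
  exact ⟨hinj, hbnd, key3 n hn hodd', hDL⟩
end

section
/- For odd n ≥ 3 with n not divisible by 3, the labelling of the 3×n grid L_{3,n} that places label 1 at the bottom-left corner and moves from label j to j+1 by going (n−1)/2 columns to the right (mod n) and one row up (mod 3) is a well-defined bijection and is an (n+1)/2-dispersed labelling; hence DL(L_{3,n}) = (n+1)/2. -/
namespace GridAux
open SimpleGraph

/-- L1 distance on the grid. -/
def D {m n : ℕ} (u v : Fin m × Fin n) : ℕ :=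
  Nat.dist u.1.val v.1.val + Nat.dist u.2.val v.2.val

lemma exists_walk {m n : ℕ} : ∀ (N : ℕ) (u v : Fin m × Fin n), D u v ≤ N →
    ∃ p : (gridGraph m n).Walk u v, p.length ≤ D u v := by
  intro N
  induction N with
  | zero =>
    intro u v h
    have h0 : D u v = 0 := Nat.le_zero.mp h
    have : u = v := by
      simp only [D, Nat.dist] at h0
      have h1 := u.1.2; have h2 := v.1.2
      ext <;> omega
    subst this
    exact ⟨Walk.nil, by simp [h0]⟩
  | succ N ih =>
    intro u v h
    by_cases huv : u = v
    · subst huv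
      exact ⟨Walk.nil, by simp⟩
    · -- find a neighbor strictly closer to v
      have : ∃ w : Fin m × Fin n, (gridGraph m n).Adj u w ∧ D w v + 1 = D u v := by
        by_cases hr : u.1 = v.1
        · have hc : u.2 ≠ v.2 := fun hc => huv (Prod.ext hr hc)
          have hcv : (u.2 : ℕ) ≠ (v.2 : ℕ) := fun h' => hc (Fin.ext h')
          rcases Nat.lt_or_ge u.2.val v.2.val with hlt | hge
          · refine ⟨(u.1, ⟨u.2.val + 1, by omega⟩), ?_, ?_⟩
            · simp [gridGraph, boxProd_adj, pathGraph_adj]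
            · simp only [D, Nat.dist, hr]
              omega
          · have hgt : v.2.val < u.2.val := by omega
            refine ⟨(u.1, ⟨u.2.val - 1, by omega⟩), ?_, ?_⟩
            · simp [gridGraph, boxProd_adj, pathGraph_adj]
              omega
            · simp only [D, Nat.dist, hr]
              omega
        · have hcv : (u.1 : ℕ) ≠ (v.1 : ℕ) := fun h' => hr (Fin.ext h')
          rcases Nat.lt_or_ge u.1.val v.1.val with hlt | hge
          · refine ⟨(⟨u.1.val + 1, by omega⟩, u.2), ?_, ?_⟩
            · simp [gridGraph, boxProd_adj, pathGraph_adj]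
            · simp only [D, Nat.dist]
              omega
          · have hgt : v.1.val < u.1.val := by omega
            refine ⟨(⟨u.1.val - 1, by omega⟩, u.2), ?_, ?_⟩
            · simp [gridGraph, boxProd_adj, pathGraph_adj]
              omega
            · simp only [D, Nat.dist]
              omega
      obtain ⟨w, hadj, hD⟩ := this
      obtain ⟨p, hp⟩ := ih w v (by omega)
      exact ⟨Walk.cons hadj p, by simp; omega⟩

lemma D_le_length {m n : ℕ} {u v : Fin m × Fin n} (p : (gridGraph m n).Walk u v) :
    D u v ≤ p.length := by
  induction p with
  | nil => simp [D, Nat.dist]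
  | @cons a b c hadj p ih =>
    simp only [Walk.length_cons]
    simp only [gridGraph, boxProd_adj, pathGraph_adj] at hadj
    have h1 := a.1.2
    rcases hadj with ⟨h, h2⟩ | ⟨h, h2⟩ <;>
      [have e : (a.2 : ℕ) = (b.2 : ℕ) := congrArg Fin.val h2;
       have e : (a.1 : ℕ) = (b.1 : ℕ) := congrArg Fin.val h2] <;>
      simp only [D, Nat.dist] at ih ⊢ <;> omega

lemma dist_eq {m n : ℕ} (u v : Fin m × Fin n) : (gridGraph m n).dist u v = D u v := by
  obtain ⟨p, hp⟩ := exists_walk (D u v) u v le_rfl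
  refine le_antisymm (le_trans (SimpleGraph.dist_le p) hp) ?_
  obtain ⟨q, hq⟩ := (Reachable.exists_walk_length_eq_dist ⟨p⟩)
  rw [← hq]
  exact D_le_length q

end GridAux

section Main

open SimpleGraph GridAux

lemma grid_inj_key (n : ℕ) (hn : 3 ≤ n) (hodd : Odd n) (h3 : ¬ (3 ∣ n))
    (a b : ℕ) (hab : a ≤ b) (hb : b < 3 * n) (h1 : a % 3 = b % 3)
    (h2 : (a * ((n - 1) / 2)) % n = (b * ((n - 1) / 2)) % n) : a = b := by
  set m := (n - 1) / 2 with hmdef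
  have hm : n = 2 * m + 1 := by obtain ⟨t, ht⟩ := hodd; omega
  have h3d : 3 ∣ b - a := by omega
  have hnd : n ∣ (b - a) * m := by
    have := (Nat.modEq_iff_dvd' (Nat.mul_le_mul_right m hab)).mp h2
    rwa [← Nat.sub_mul] at this
  have hcop : Nat.Coprime n m := by
    have h1' := Nat.gcd_dvd_left n m
    have h2' := Nat.gcd_dvd_right n m
    have hd : Nat.gcd n m ∣ n - 2 * m := Nat.dvd_sub h1' (h2'.mul_left 2)
    have : n - 2 * m = 1 := by omega
    exact Nat.dvd_one.mp (this ▸ hd)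
  have hnd' : n ∣ b - a := hcop.dvd_of_dvd_mul_right hnd
  have hcop3 : Nat.Coprime 3 n := (Nat.prime_three.coprime_iff_not_dvd).mpr h3
  have : 3 * n ∣ b - a := hcop3.mul_dvd_of_dvd_of_dvd h3d hnd'
  rcases Nat.eq_zero_or_pos (b - a) with h0 | hpos
  · omega
  · have := Nat.le_of_dvd hpos this
    omega

theorem DL_grid_three_rows (n : ℕ) (hn : 3 ≤ n) (hodd : Odd n) (h3 : ¬ (3 ∣ n)) :
    let f : Fin (3 * n) → Fin 3 × Fin n := fun j =>
      (⟨(j : ℕ) % 3, by omega⟩,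
       ⟨((j : ℕ) * ((n - 1) / 2)) % n, Nat.mod_lt _ (by omega)⟩)
    Function.Bijective f ∧
      (∀ i j : Fin (3 * n), (j : ℕ) = (i : ℕ) + 1 →
        (n + 1) / 2 ≤ (gridGraph 3 n).dist (f i) (f j)) ∧
      DL (gridGraph 3 n) = (n + 1) / 2 := by
  intro f
  set m := (n - 1) / 2 with hmdef
  have hm : n = 2 * m + 1 := by obtain ⟨t, ht⟩ := hodd; omega
  have hhalf : (n + 1) / 2 = m + 1 := by omega
  have hcard : Fintype.card (Fin 3 × Fin n) = 3 * n := by simp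
  -- injectivity
  have hinj : Function.Injective f := by
    intro i j hij
    have hr : (i : ℕ) % 3 = (j : ℕ) % 3 := congrArg (fun p => (p.1 : ℕ)) hij
    have hc : ((i : ℕ) * m) % n = ((j : ℕ) * m) % n := congrArg (fun p => (p.2 : ℕ)) hij
    apply Fin.ext
    rcases le_total (i : ℕ) (j : ℕ) with h | h
    · exact grid_inj_key n hn hodd h3 _ _ h j.2 hr hc
    · exact (grid_inj_key n hn hodd h3 _ _ h i.2 hr.symm hc.symm).symm
  have hbij : Function.Bijective f := by
    rw [Fintype.bijective_iff_injective_and_card]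
    exact ⟨hinj, by simp⟩
  -- dispersion
  have hdisp : ∀ i j : Fin (3 * n), (j : ℕ) = (i : ℕ) + 1 →
      (n + 1) / 2 ≤ (gridGraph 3 n).dist (f i) (f j) := by
    intro i j hij
    rw [GridAux.dist_eq, hhalf]
    show m + 1 ≤ Nat.dist ((i : ℕ) % 3) ((j : ℕ) % 3)
        + Nat.dist (((i : ℕ) * m) % n) (((j : ℕ) * m) % n)
    rw [hij]
    have hcol : (((i : ℕ) + 1) * m) % n = (((i : ℕ) * m) % n + m) % n := by
      rw [add_mul, one_mul, Nat.add_mod, Nat.mod_eq_of_lt (show m < n by omega)]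
    rw [hcol]
    set c := ((i : ℕ) * m) % n with hcdef
    have hc : c < n := Nat.mod_lt _ (by omega)
    have hrow : 1 ≤ Nat.dist ((i : ℕ) % 3) (((i : ℕ) + 1) % 3) := by
      simp only [Nat.dist]; omega
    clear hcol hcdef
    rcases Nat.lt_or_ge (c + m) n with hlt | hge
    · have e1 : (c + m) % n = c + m := Nat.mod_eq_of_lt hlt
      rw [e1]
      simp only [Nat.dist] at hrow ⊢
      omega
    · have e2 : (c + m) % n = c + m - n := by
        rw [Nat.mod_eq_sub_mod hge]
        exact Nat.mod_eq_of_lt (by omega)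
      rw [e2]
      simp only [Nat.dist] at hrow ⊢
      omega
  refine ⟨hbij, hdisp, ?_⟩
  -- DL computation
  have hmem : HasDispersedLabelling (gridGraph 3 n) ((n + 1) / 2) := by
    refine ⟨(finCongr hcard).trans (Equiv.ofBijective f hbij), ?_⟩
    intro i j hij
    exact hdisp (Fin.cast hcard i) (Fin.cast hcard j) hij
  have hub : ∀ k ∈ {k | HasDispersedLabelling (gridGraph 3 n) k}, k ≤ (n + 1) / 2 := by
    rintro k ⟨φ, hφ⟩
    set v₀ : Fin 3 × Fin n := (⟨1, by omega⟩, ⟨m, by omega⟩) with hv₀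
    have hDbound : ∀ w : Fin 3 × Fin n, GridAux.D v₀ w ≤ m + 1 ∧ GridAux.D w v₀ ≤ m + 1 := by
      intro w
      have h1 := w.1.2
      have h2 := w.2.2
      simp only [GridAux.D, Nat.dist, hv₀]
      omega
    set t := φ.symm v₀ with ht
    have htcard : (t : ℕ) < Fintype.card (Fin 3 × Fin n) := t.2
    rw [hhalf]
    rcases Nat.lt_or_ge ((t : ℕ) + 1) (Fintype.card (Fin 3 × Fin n)) with hlt | hge
    · have := hφ t ⟨(t : ℕ) + 1, hlt⟩ rfl
      rw [Equiv.apply_symm_apply] at this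
      calc k ≤ _ := this
        _ ≤ m + 1 := by rw [GridAux.dist_eq]; exact (hDbound _).1
    · have htpos : 1 ≤ (t : ℕ) := by
        have : 9 ≤ Fintype.card (Fin 3 × Fin n) := by rw [hcard]; omega
        omega
      have := hφ ⟨(t : ℕ) - 1, by omega⟩ t (by simp; omega)
      rw [Equiv.apply_symm_apply] at this
      calc k ≤ _ := this
        _ ≤ m + 1 := by rw [GridAux.dist_eq]; exact (hDbound _).2
  apply le_antisymm
  · exact csSup_le ⟨_, hmem⟩ hub
  · exact le_csSup ⟨(n + 1) / 2, hub⟩ hmem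

end Main
end

section
/- For all n ≥ 2, DL(Q_n) = n − 1, where Q_n is the n-dimensional hypercube. -/
/-- The `n`-dimensional hypercube: vertices are elements of `(ZMod 2)^n`, adjacent iff
they differ in exactly one coordinate. -/
def hypercube (n : ℕ) : SimpleGraph (Fin n → ZMod 2) where
  Adj v w := hammingDist v w = 1
  symm := by
    constructor
    intro v w h
    rwa [hammingDist_comm]
  loopless := by
    constructor
    intro v h
    simp [hammingDist_self] at h

namespace DLAux

open Finset Function

/-! ### Gray code on ℕ -/

def gray (j : ℕ) : ℕ := j ^^^ (j / 2)

lemma gray_div_two (j : ℕ) : gray j / 2 = gray (j / 2) := by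
  apply Nat.eq_of_testBit_eq
  intro i
  simp only [gray, Nat.testBit_div_two, Nat.testBit_xor]

lemma gray_inj : ∀ a b : ℕ, gray a = gray b → a = b := by
  intro a
  induction a using Nat.strong_induction_on with
  | _ a ih =>
    intro b h
    rcases Nat.eq_zero_or_pos a with ha | ha
    · subst ha
      have h0 : b ^^^ b / 2 = 0 := by simpa [gray] using h.symm
      have := xor_eq_zero_iff.mp h0
      omega
    · have h2 : gray (a / 2) = gray (b / 2) := by
        rw [← gray_div_two, ← gray_div_two, h]
      have hd : a / 2 = b / 2 := ih (a / 2) (by omega) _ h2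
      have h0 : (gray a).testBit 0 = (gray b).testBit 0 := by rw [h]
      simp only [gray, Nat.testBit_xor, hd, Nat.testBit_zero] at h0
      revert h0
      rcases Nat.mod_two_eq_zero_or_one a with h1 | h1 <;>
        rcases Nat.mod_two_eq_zero_or_one b with h2 | h2 <;>
        rcases Nat.mod_two_eq_zero_or_one (b / 2) with h3 | h3 <;>
        simp [h1, h2, h3] <;> omega

lemma xor_succ (j : ℕ) : ∃ s, j ^^^ (j + 1) = 2 ^ (s + 1) - 1 := by
  induction j using Nat.strong_induction_on with
  | _ j ih =>
    rcases Nat.even_or_odd j with ⟨m, hm⟩ | ⟨m, hm⟩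
    · refine ⟨0, ?_⟩
      apply Nat.eq_of_testBit_eq
      intro i
      cases i with
      | zero =>
        rw [Nat.testBit_xor, Nat.testBit_zero, Nat.testBit_zero, Nat.testBit_zero,
          show j % 2 = 0 by omega, show (j + 1) % 2 = 1 by omega,
          show (2 ^ (0 + 1) - 1) % 2 = 1 from rfl]
        rfl
      | succ i =>
        rw [Nat.testBit_xor, Nat.testBit_succ, Nat.testBit_succ, Nat.testBit_succ,
          show j / 2 = m by omega, show (j + 1) / 2 = m by omega,
          show ((2 : ℕ) ^ (0 + 1) - 1) / 2 = 0 from rfl]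
        simp
    · obtain ⟨s, hs⟩ := ih m (by omega)
      refine ⟨s + 1, ?_⟩
      apply Nat.eq_of_testBit_eq
      intro i
      cases i with
      | zero =>
        have h4 : (2 : ℕ) ^ (s + 1 + 1) = 4 * 2 ^ s := by rw [pow_succ, pow_succ]; ring
        have h5 : (1 : ℕ) ≤ 2 ^ s := Nat.one_le_two_pow
        rw [Nat.testBit_xor, Nat.testBit_zero, Nat.testBit_zero, Nat.testBit_zero,
          show j % 2 = 1 by omega, show (j + 1) % 2 = 0 by omega,
          show (2 ^ (s + 1 + 1) - 1) % 2 = 1 by omega]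
        rfl
      | succ i =>
        have h4 : (2 : ℕ) ^ (s + 1 + 1) = 2 * 2 ^ (s + 1) := by rw [pow_succ]; ring
        have h5 : (2 : ℕ) ^ (s + 1) ≥ 1 := Nat.one_le_two_pow
        rw [Nat.testBit_xor, Nat.testBit_succ, Nat.testBit_succ, Nat.testBit_succ,
          show j / 2 = m by omega, show (j + 1) / 2 = m + 1 by omega,
          ← Nat.testBit_xor, hs, show (2 ^ (s + 1 + 1) - 1) / 2 = 2 ^ (s + 1) - 1 by omega]

lemma gray_succ (j : ℕ) : ∃ t, gray j ^^^ gray (j + 1) = 2 ^ t := by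
  obtain ⟨s, hs⟩ := xor_succ j
  refine ⟨s, ?_⟩
  have e : ∀ i, (j.testBit i ^^ (j + 1).testBit i) = decide (i < s + 1) := by
    intro i
    rw [← Nat.testBit_xor, hs, Nat.testBit_two_pow_sub_one]
  apply Nat.eq_of_testBit_eq
  intro i
  simp only [gray, Nat.testBit_xor, Nat.testBit_div_two, Nat.testBit_two_pow]
  have h1 := e i
  have h2 := e (i + 1)
  revert h1 h2
  cases hji : j.testBit i <;> cases hji1 : j.testBit (i + 1) <;>
    cases hki : (j + 1).testBit i <;> cases hki1 : (j + 1).testBit (i + 1) <;>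
    simp <;> omega

lemma lt_pow_of_bits (x n : ℕ) (h : ∀ i, n ≤ i → x.testBit i = false) : x < 2 ^ n := by
  refine Nat.lt_of_testBit n (h n le_rfl) (by simp [Nat.testBit_two_pow]) ?_
  intro j hj
  rw [h j hj.le, Nat.testBit_two_pow]
  simp
  omega

lemma xor_lt_pow {a b n : ℕ} (ha : a < 2 ^ n) (hb : b < 2 ^ n) : a ^^^ b < 2 ^ n := by
  apply lt_pow_of_bits
  intro i hi
  have h2 : (2 : ℕ) ^ n ≤ 2 ^ i := Nat.pow_le_pow_right (by norm_num) hi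
  rw [Nat.testBit_xor, Nat.testBit_eq_false_of_lt (lt_of_lt_of_le ha h2),
    Nat.testBit_eq_false_of_lt (lt_of_lt_of_le hb h2)]
  rfl

lemma gray_lt {n j : ℕ} (h : j < 2 ^ n) : gray j < 2 ^ n :=
  xor_lt_pow h (lt_of_le_of_lt (Nat.div_le_self _ _) h)

/-! ### bits and the linear twist map -/

def bits (n m : ℕ) : Fin n → ZMod 2 := fun i => if m.testBit (i : ℕ) then 1 else 0

lemma bits_inj {n a b : ℕ} (ha : a < 2 ^ n) (hb : b < 2 ^ n)
    (h : bits n a = bits n b) : a = b := by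
  apply Nat.eq_of_testBit_eq
  intro i
  rcases lt_or_ge i n with hi | hi
  · have := congrFun h ⟨i, hi⟩
    simp only [bits] at this
    rcases Bool.eq_false_or_eq_true (a.testBit i) with h1 | h1 <;>
      rcases Bool.eq_false_or_eq_true (b.testBit i) with h2 | h2 <;>
      simp [h1, h2] at this ⊢
  · have h2 : (2 : ℕ) ^ n ≤ 2 ^ i := Nat.pow_le_pow_right (by norm_num) hi
    rw [Nat.testBit_eq_false_of_lt (lt_of_lt_of_le ha h2),
      Nat.testBit_eq_false_of_lt (lt_of_lt_of_le hb h2)]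

def lmap (n : ℕ) (x : Fin n → ZMod 2) : Fin n → ZMod 2 :=
  fun k => (∑ i, x i) + (if (k : ℕ) = n - 1 then 0 else x k)

lemma lmap_inj {n : ℕ} (hn : 2 ≤ n) {x y : Fin n → ZMod 2}
    (h : lmap n x = lmap n y) : x = y := by
  have hlt : n - 1 < n := by omega
  set k0 : Fin n := ⟨n - 1, hlt⟩ with hk0
  have hs : ∑ i, x i = ∑ i, y i := by
    have := congrFun h k0
    simpa [lmap, hk0] using this
  have hne : ∀ k : Fin n, k ≠ k0 → x k = y k := by
    intro k hk
    have hkc : (k : ℕ) ≠ n - 1 := by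
      intro hc
      exact hk (Fin.ext hc)
    have := congrFun h k
    simp only [lmap, if_neg hkc, hs] at this
    exact add_left_cancel this
  have hsum : x k0 + ∑ i ∈ Finset.univ.erase k0, x i
      = y k0 + ∑ i ∈ Finset.univ.erase k0, y i := by
    rw [Finset.add_sum_erase _ _ (Finset.mem_univ k0),
      Finset.add_sum_erase _ _ (Finset.mem_univ k0)]
    exact hs
  have hsame : ∑ i ∈ Finset.univ.erase k0, x i = ∑ i ∈ Finset.univ.erase k0, y i :=
    Finset.sum_congr rfl fun i hi => hne i (Finset.ne_of_mem_erase hi)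
  rw [hsame] at hsum
  have hk0eq : x k0 = y k0 := add_right_cancel hsum
  funext k
  by_cases hk : k = k0
  · rw [hk, hk0eq]
  · exact hne k hk

lemma lmap_add {n : ℕ} (x y : Fin n → ZMod 2) :
    lmap n (x + y) = lmap n x + lmap n y := by
  funext k
  simp only [lmap, Pi.add_apply, Finset.sum_add_distrib]
  split <;> ring

/-- The dispersed sequence. -/
def seqv (n j : ℕ) : Fin n → ZMod 2 := lmap n (bits n (gray j))

lemma seqv_inj {n : ℕ} (hn : 2 ≤ n) {a b : ℕ} (ha : a < 2 ^ n) (hb : b < 2 ^ n)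
    (h : seqv n a = seqv n b) : a = b :=
  gray_inj a b (bits_inj (gray_lt ha) (gray_lt hb) (lmap_inj hn h))

lemma seqv_succ {n : ℕ} (hn : 2 ≤ n) (j : ℕ) (hj : j + 1 < 2 ^ n) :
    n - 1 ≤ hammingDist (seqv n j) (seqv n (j + 1)) := by
  obtain ⟨t, ht⟩ := gray_succ j
  have htn : t < n := by
    have h1 : gray j ^^^ gray (j + 1) < 2 ^ n :=
      xor_lt_pow (gray_lt (by omega)) (gray_lt hj)
    rw [ht] at h1
    exact (Nat.pow_lt_pow_iff_right (by norm_num)).mp h1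
  set tF : Fin n := ⟨t, htn⟩ with htF
  -- the difference of the bit vectors is the indicator of tF
  have hb : bits n (gray (j + 1)) = bits n (gray j) + fun i => if i = tF then 1 else 0 := by
    funext i
    have hbit : (gray (j + 1)).testBit (i : ℕ)
        = xor ((gray j).testBit (i : ℕ)) ((2 ^ t).testBit (i : ℕ)) := by
      rw [← ht, ← Nat.testBit_xor,
        show gray j ^^^ (gray j ^^^ gray (j + 1)) = gray (j + 1) by
          rw [← Nat.xor_assoc, Nat.xor_self, Nat.zero_xor]]
    have hit : ((2 : ℕ) ^ t).testBit (i : ℕ) = decide (i = tF) := by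
      rw [Nat.testBit_two_pow]
      rcases eq_or_ne i tF with he | he
      · simp [he, htF]
      · have : t ≠ (i : ℕ) := by
          intro hc
          exact he (Fin.ext hc.symm)
        simp [this, he]
    have key : ∀ a b : Bool, (if xor a b then (1 : ZMod 2) else 0)
        = (if a then 1 else 0) + (if b then 1 else 0) := by decide
    simp only [bits, Pi.add_apply, hbit, key, hit]
    simp
  have hseq : seqv n (j + 1) = seqv n j + lmap n fun i => if i = tF then 1 else 0 := by
    rw [seqv, hb, lmap_add]
    rfl
  -- the coordinates where the two agree form a subset of {tF}
  have hzero : ∀ k : Fin n, seqv n j k = seqv n (j + 1) k → k = tF := by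
    intro k hk
    rw [hseq] at hk
    simp only [Pi.add_apply, left_eq_add, lmap] at hk
    have hsum : (∑ i : Fin n, (if i = tF then (1 : ZMod 2) else 0)) = 1 := by
      simp [Finset.sum_ite_eq']
    rw [hsum] at hk
    by_contra hne
    rcases eq_or_ne ((k : ℕ)) (n - 1) with hc | hc
    · rw [if_pos hc] at hk
      simp at hk
    · rw [if_neg hc, if_neg hne] at hk
      simp at hk
  -- now count
  rw [hammingDist]
  have hcomp := Finset.card_filter_add_card_filter_not
    (s := (Finset.univ : Finset (Fin n))) (fun k => seqv n j k ≠ seqv n (j + 1) k)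
  have hsub : Finset.univ.filter (fun k => ¬ seqv n j k ≠ seqv n (j + 1) k) ⊆ {tF} := by
    intro k hk
    simp only [Finset.mem_filter, not_not] at hk
    simp [hzero k hk.2]
  have hle : (Finset.univ.filter (fun k => ¬ seqv n j k ≠ seqv n (j + 1) k)).card ≤ 1 := by
    have := Finset.card_le_card hsub
    simpa using this
  have hcardu : (Finset.univ : Finset (Fin n)).card = n := by simp
  omega

/-! ### distance in the hypercube equals Hamming distance -/

lemma exists_walk (n : ℕ) (v w : Fin n → ZMod 2) :
    ∃ p : (hypercube n).Walk v w, p.length = hammingDist v w := by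
  generalize hd : hammingDist v w = d
  induction d generalizing v with
  | zero =>
    have : v = w := hammingDist_eq_zero.mp hd
    subst this
    exact ⟨SimpleGraph.Walk.nil, rfl⟩
  | succ d ih =>
    have hne : v ≠ w := by
      intro h
      subst h
      simp at hd
    obtain ⟨i, hi⟩ := Function.ne_iff.mp hne
    set v' := Function.update v i (w i) with hv'
    have hmem : i ∈ Finset.univ.filter (fun k => v k ≠ w k) := by
      simp [hi]
    have hadj : (hypercube n).Adj v v' := by
      show hammingDist v v' = 1
      rw [hammingDist]
      rw [show Finset.univ.filter (fun k => v k ≠ v' k) = {i} by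
        ext k
        simp only [Finset.mem_filter, Finset.mem_univ, true_and, Finset.mem_singleton, hv',
          Function.update_apply]
        constructor
        · intro hk
          by_contra hc
          rw [if_neg hc] at hk
          exact hk rfl
        · intro hk
          subst hk
          simpa using hi]
      simp
    have h2 : hammingDist v' w = d := by
      rw [hammingDist]
      rw [show Finset.univ.filter (fun k => v' k ≠ w k)
          = (Finset.univ.filter (fun k => v k ≠ w k)).erase i by
        ext k
        simp only [Finset.mem_filter, Finset.mem_univ, true_and, Finset.mem_erase, hv',
          Function.update_apply]
        constructor
        · intro hk
          rcases eq_or_ne k i with hc | hc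
          · rw [if_pos hc] at hk
            subst hc
            exact absurd rfl hk
          · rw [if_neg hc] at hk
            exact ⟨hc, hk⟩
        · intro ⟨hc, hk⟩
          rw [if_neg hc]
          exact hk]
      rw [Finset.card_erase_of_mem hmem]
      rw [hammingDist] at hd
      omega
    obtain ⟨p, hp⟩ := ih v' h2
    exact ⟨SimpleGraph.Walk.cons hadj p, by simp [hp]⟩

lemma zmod2_ne {a b : ZMod 2} (h : a ≠ b) : b = a + 1 := by
  revert h
  revert a b
  decide

lemma zmod2_addtwo (a : ZMod 2) : a + 1 + 1 = a := by
  revert a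
  decide

lemma hamming_le_length {n : ℕ} {v w : Fin n → ZMod 2} (p : (hypercube n).Walk v w) :
    hammingDist v w ≤ p.length := by
  induction p with
  | nil => simp
  | @cons u x w h p ih =>
    have h1 : hammingDist u w ≤ hammingDist u x + hammingDist x w :=
      hammingDist_triangle _ _ _
    have h2 : hammingDist u x = 1 := h
    rw [SimpleGraph.Walk.length_cons]
    omega

lemma dist_eq_hamming {n : ℕ} (v w : Fin n → ZMod 2) :
    (hypercube n).dist v w = hammingDist v w := by
  obtain ⟨p, hp⟩ := exists_walk n v w
  have h1 : (hypercube n).dist v w ≤ hammingDist v w := hp ▸ SimpleGraph.dist_le p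
  have hreach : (hypercube n).Reachable v w := ⟨p⟩
  obtain ⟨q, hq⟩ := hreach.exists_walk_length_eq_dist
  have h2 : hammingDist v w ≤ (hypercube n).dist v w := hq ▸ hamming_le_length q
  omega

lemma card_vert (n : ℕ) : Fintype.card (Fin n → ZMod 2) = 2 ^ n := by
  rw [Fintype.card_fun]
  simp

/-! ### the two bounds -/

lemma hasDisp {n : ℕ} (hn : 2 ≤ n) : HasDispersedLabelling (hypercube n) (n - 1) := by
  have hcard := card_vert n
  have hinj : Function.Injective (fun j : Fin (2 ^ n) => seqv n (j : ℕ)) := by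
    intro a b hab
    exact Fin.ext (seqv_inj hn a.2 b.2 hab)
  have hbij : Function.Bijective (fun j : Fin (2 ^ n) => seqv n (j : ℕ)) :=
    (Fintype.bijective_iff_injective_and_card _).mpr ⟨hinj, by simp [hcard]⟩
  refine ⟨(finCongr hcard).trans (Equiv.ofBijective _ hbij), ?_⟩
  intro i j hij
  simp only [Equiv.trans_apply, Equiv.ofBijective_apply, finCongr_apply, Fin.coe_cast]
  rw [dist_eq_hamming, hij]
  refine seqv_succ hn i ?_
  have hj2 : (i : ℕ) + 1 < Fintype.card (Fin n → ZMod 2) := hij ▸ j.2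
  omega

lemma upper {n : ℕ} (hn : 2 ≤ n) (k : ℕ)
    (hk : HasDispersedLabelling (hypercube n) k) : k ≤ n - 1 := by
  by_contra hcon
  have hkn : n ≤ k := by omega
  obtain ⟨φ, hφ⟩ := hk
  have hcard := card_vert n
  have h4 : 4 ≤ Fintype.card (Fin n → ZMod 2) := by
    rw [hcard]
    calc (4 : ℕ) = 2 ^ 2 := rfl
    _ ≤ 2 ^ n := Nat.pow_le_pow_right (by norm_num) hn
  have key : ∀ i j : Fin (Fintype.card (Fin n → ZMod 2)),
      (j : ℕ) = (i : ℕ) + 1 → ∀ k', φ j k' = φ i k' + 1 := by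
    intro i j hij k'
    have h1 := hφ i j hij
    rw [dist_eq_hamming] at h1
    have h2 : hammingDist (φ i) (φ j) ≤ n := by
      have h := hammingDist_le_card_fintype (x := φ i) (y := φ j)
      rwa [Fintype.card_fin] at h
    have h3 : hammingDist (φ i) (φ j) = n := by omega
    have hall : Finset.univ.filter (fun k'' => φ i k'' ≠ φ j k'') = Finset.univ := by
      apply Finset.eq_univ_of_card
      rw [hammingDist] at h3
      simp [h3]
    have hne : φ i k' ≠ φ j k' := by
      have hmem : k' ∈ Finset.univ.filter (fun k'' => φ i k'' ≠ φ j k'') := by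
        rw [hall]
        exact Finset.mem_univ k'
      simpa using hmem
    exact zmod2_ne hne
  have k1 := key ⟨0, by omega⟩ ⟨1, by omega⟩ rfl
  have k2 := key ⟨1, by omega⟩ ⟨2, by omega⟩ rfl
  have heq : φ ⟨2, by omega⟩ = φ ⟨0, by omega⟩ := by
    funext k'
    rw [k2 k', k1 k']
    exact zmod2_addtwo _
  have h20 := φ.injective heq
  have : (2 : ℕ) = 0 := congrArg Fin.val h20
  omega

end DLAux

theorem DL_hypercube (n : ℕ) (hn : 2 ≤ n) :
    DL (hypercube n) = n - 1 := by
  have hset : {k | HasDispersedLabelling (hypercube n) k} = Set.Iic (n - 1) := by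
    ext k
    simp only [Set.mem_setOf_eq, Set.mem_Iic]
    constructor
    · exact DLAux.upper hn k
    · intro hk
      obtain ⟨φ, hφ⟩ := DLAux.hasDisp hn
      exact ⟨φ, fun i j hij => le_trans hk (hφ i j hij)⟩
  rw [DL, hset, csSup_Iic]
end

section
/- For all n ≥ 2, there exists an ordering v_1, ..., v_{2^n} of all binary n-tuples such that the Hamming distance between v_j and v_{j+1} is at least n−1 for every 1 ≤ j ≤ 2^n − 1, with v_1 = (0,...,0), v_{2^{n-1}} = (1,...,1,0), v_{2^{n-1}+1} = (0,...,0,1), and v_{2^n} = (1,...,1). -/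
private lemma hd_snoc {n : ℕ} (a c : Fin n → ZMod 2) (b d : ZMod 2) :
    hammingDist (Fin.snoc a b : Fin (n+1) → ZMod 2) (Fin.snoc c d) =
      hammingDist a c + if b = d then 0 else 1 := by
  classical
  simp only [hammingDist, Finset.card_filter]
  rw [Fin.sum_univ_castSucc]
  simp [Fin.snoc_castSucc, Fin.snoc_last, ite_not]

private lemma hd_full {n : ℕ} {f g : Fin n → ZMod 2} (h : ∀ i, f i ≠ g i) :
    hammingDist f g = n := by
  simp only [hammingDist]
  rw [Finset.filter_true_of_mem (fun i _ => h i)]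
  simp

set_option maxHeartbeats 1600000 in
theorem hypercube_dispersed_ordering (n : ℕ) (hn : 2 ≤ n) :
    ∃ v : Fin (2 ^ n) → (Fin n → ZMod 2),
      Function.Bijective v ∧
      (∀ (j : Fin (2 ^ n)) (h : (j : ℕ) + 1 < 2 ^ n),
        n - 1 ≤ hammingDist (v j) (v ⟨(j : ℕ) + 1, h⟩)) ∧
      v ⟨0, Nat.two_pow_pos n⟩ = (fun _ => (0 : ZMod 2)) ∧
      v ⟨2 ^ (n - 1) - 1, by
          have h1 : 0 < 2 ^ (n - 1) := Nat.two_pow_pos _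
          have h : 2 ^ (n - 1) < 2 ^ n :=
            Nat.pow_lt_pow_right (show (1:ℕ) < 2 by norm_num) (show n - 1 < n by omega)
          omega⟩ = (fun i : Fin n => if (i : ℕ) = n - 1 then (0 : ZMod 2) else 1) ∧
      v ⟨2 ^ (n - 1), by
          have h : 2 ^ (n - 1) < 2 ^ n :=
            Nat.pow_lt_pow_right (show (1:ℕ) < 2 by norm_num) (show n - 1 < n by omega)
          omega⟩ = (fun i : Fin n => if (i : ℕ) = n - 1 then (1 : ZMod 2) else 0) ∧
      v ⟨2 ^ n - 1, by have h := Nat.two_pow_pos n; omega⟩ = (fun _ => (1 : ZMod 2)) := by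
  induction n, hn using Nat.le_induction with
  | base =>
    refine ⟨![![0,0],![1,0],![0,1],![1,1]], ?_, ?_, ?_, ?_, ?_, ?_⟩ <;> decide
  | succ n hn ih =>
    obtain ⟨w, wbij, wdist, w0, wmid1, wmid2, wlast⟩ := ih
    have winj := wbij.1
    have w0' : ∀ (p : 0 < 2^n), w ⟨0, p⟩ = (fun _ => (0 : ZMod 2)) := fun _ => w0
    have wmid1' : ∀ (p : 2^(n-1)-1 < 2^n), w ⟨2^(n-1)-1, p⟩ =
        (fun i : Fin n => if (i : ℕ) = n - 1 then (0 : ZMod 2) else 1) := fun _ => wmid1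
    have wmid2' : ∀ (p : 2^(n-1) < 2^n), w ⟨2^(n-1), p⟩ =
        (fun i : Fin n => if (i : ℕ) = n - 1 then (1 : ZMod 2) else 0) := fun _ => wmid2
    have wlast' : ∀ (p : 2^n - 1 < 2^n), w ⟨2^n - 1, p⟩ = (fun _ => (1 : ZMod 2)) :=
      fun _ => wlast
    have hpow : (2:ℕ)^(n+1) = 2^n + 2^n := by rw [pow_succ]; omega
    have hhalf : (2:ℕ)^(n-1) < 2^n := Nat.pow_lt_pow_right one_lt_two (by omega)
    have hhalfpos : 0 < (2:ℕ)^(n-1) := Nat.two_pow_pos _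
    have hnpos : 0 < (2:ℕ)^n := Nat.two_pow_pos _
    set ε : ℕ → ZMod 2 := fun q => if q < 2^(n-1) then (q : ZMod 2) else ((q+1 : ℕ) : ZMod 2)
      with hε
    have εalt : ∀ q : ℕ, q + 1 ≠ 2^(n-1) → ε (q+1) = ε q + 1 := by
      intro q hq
      by_cases h1 : q + 1 < 2^(n-1)
      · simp only [hε]
        rw [if_pos h1, if_pos (by omega)]
        push_cast; ring
      · simp only [hε]
        rw [if_neg h1, if_neg (by omega)]
        push_cast; ring
    have εne : ∀ x : ZMod 2, ¬ (x = x + 1) := by decide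
    have ε2n : ε (2^n - 1) = 0 := by
      simp only [hε]
      rw [if_neg (by omega), show 2^n - 1 + 1 = 2^n by omega]
      rw [show (2:ℕ)^n = 2 * 2^(n-1) by rw [← pow_succ']; congr 1; omega]
      push_cast
      rw [show (2 : ZMod 2) = 0 from by decide]
      ring
    have ε0 : ε 0 = 0 := by
      simp only [hε]; rw [if_pos hhalfpos]; simp
    set v : Fin (2^(n+1)) → Fin (n+1) → ZMod 2 :=
      fun j => Fin.snoc (w ⟨(j:ℕ) % 2^n, Nat.mod_lt _ hnpos⟩)
        (ε ((j:ℕ) % 2^n) + if (j:ℕ) < 2^n then 0 else 1) with hvdef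
    have hv : ∀ (a q : ℕ) (ha : a < 2^(n+1)) (hq : q < 2^n) (b : ZMod 2),
        a % 2^n = q → ε q + (if a < 2^n then 0 else 1) = b →
        v ⟨a, ha⟩ = Fin.snoc (w ⟨q, hq⟩) b := by
      intro a q ha hq b h1 h2
      subst h1; subst h2
      rfl
    have hmod_hi : ∀ a : ℕ, a < 2^(n+1) → ¬ a < 2^n → a % 2^n = a - 2^n := by
      intro a ha hna
      rw [Nat.mod_eq_sub_mod (by omega)]
      exact Nat.mod_eq_of_lt (by omega)
    have hntop : n + 1 - 1 = n := rfl
    refine ⟨v, ?_, ?_, ?_, ?_, ?_, ?_⟩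
    · -- bijective
      refine (Fintype.bijective_iff_injective_and_card v).mpr ⟨?_, by simp [ZMod.card]⟩
      rintro ⟨a1, h1⟩ ⟨a2, h2⟩ hEq
      have q1lt : a1 % 2^n < 2^n := Nat.mod_lt _ hnpos
      have q2lt : a2 % 2^n < 2^n := Nat.mod_lt _ hnpos
      rw [hv a1 (a1 % 2^n) h1 q1lt _ rfl rfl,
          hv a2 (a2 % 2^n) h2 q2lt _ rfl rfl] at hEq
      have hfr : w ⟨a1 % 2^n, q1lt⟩ = w ⟨a2 % 2^n, q2lt⟩ := by
        funext i
        have := congrFun hEq (Fin.castSucc i)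
        simpa [Fin.snoc_castSucc] using this
      have hq : a1 % 2^n = a2 % 2^n := by
        have := winj hfr
        simpa [Fin.mk.injEq] using this
      have hbit := congrFun hEq (Fin.last n)
      simp only [Fin.snoc_last, hq] at hbit
      have hiff : (a1 < 2^n) ↔ (a2 < 2^n) := by
        by_cases c1 : a1 < 2^n <;> by_cases c2 : a2 < 2^n <;>
          simp [c1, c2] at hbit ⊢
      apply Fin.ext
      show a1 = a2
      by_cases c1 : a1 < 2^n
      · have c2 := hiff.mp c1
        rwa [Nat.mod_eq_of_lt c1, Nat.mod_eq_of_lt c2] at hq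
      · have c2 : ¬ a2 < 2^n := fun h => c1 (hiff.mpr h)
        rw [hmod_hi a1 h1 c1, hmod_hi a2 h2 c2] at hq
        omega
    · -- distances
      rintro ⟨J, hJ⟩ hj
      replace hj : J + 1 < 2^(n+1) := hj
      by_cases hA : J + 1 < 2^n
      · have pa : J < 2^n := by omega
        rw [hv J J hJ pa (ε J) (Nat.mod_eq_of_lt pa) (by rw [if_pos pa]; ring),
            hv (J+1) (J+1) hj hA (ε (J+1)) (Nat.mod_eq_of_lt hA) (by rw [if_pos hA]; ring),
            hd_snoc]
        by_cases hmid : J + 1 = 2^(n-1)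
        · have e1 : (⟨J, pa⟩ : Fin (2^n)) = ⟨2^(n-1)-1, by omega⟩ := by
            simp only [Fin.mk.injEq]; omega
          have e2 : (⟨J+1, hA⟩ : Fin (2^n)) = ⟨2^(n-1), by omega⟩ := by
            simp only [Fin.mk.injEq]; omega
          rw [e1, e2, wmid1' _, wmid2' _]
          have hdn : hammingDist (fun i : Fin n => if (i:ℕ) = n-1 then (0:ZMod 2) else 1)
              (fun i : Fin n => if (i:ℕ) = n-1 then (1:ZMod 2) else 0) = n := by
            apply hd_full; intro i; by_cases hi : (i:ℕ) = n-1 <;> simp [hi]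
          rw [hdn, hntop]
          exact Nat.le_add_right _ _
        · have hne : ¬ (ε J = ε (J+1)) := by
            rw [εalt J hmid]; exact εne _
          rw [if_neg hne, hntop]
          have hw := wdist ⟨J, pa⟩ hA
          calc n = (n-1) + 1 := by omega
          _ ≤ _ := Nat.add_le_add_right hw 1
      · by_cases hB : J < 2^n
        · -- seam : J + 1 = 2^n
          rw [hv J J hJ hB (ε J) (Nat.mod_eq_of_lt hB) (by rw [if_pos hB]; ring),
              hv (J+1) 0 hj hnpos (ε 0 + 1)
                (by rw [show J + 1 = 2^n by omega]; exact Nat.mod_self _)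
                (by rw [if_neg (by omega)]),
              hd_snoc]
          have e1 : (⟨J, hB⟩ : Fin (2^n)) = ⟨2^n - 1, by omega⟩ := by
            simp only [Fin.mk.injEq]; omega
          rw [e1, wlast' _, w0' _]
          have hdn : hammingDist (fun _ : Fin n => (1:ZMod 2)) (fun _ : Fin n => (0:ZMod 2))
              = n := by
            apply hd_full; intro i; decide
          rw [hdn, hntop]
          exact Nat.le_add_right _ _
        · have pq : J - 2^n < 2^n := by omega
          have pq1 : (J - 2^n) + 1 < 2^n := by omega
          have hq1 : J % 2^n = J - 2^n := hmod_hi J hJ hB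
          have hq2 : (J+1) % 2^n = (J - 2^n) + 1 := by
            rw [Nat.mod_eq_sub_mod (by omega), show J + 1 - 2^n = (J - 2^n) + 1 by omega]
            exact Nat.mod_eq_of_lt pq1
          rw [hv J (J - 2^n) hJ pq (ε (J - 2^n) + 1) hq1 (by rw [if_neg hB]),
              hv (J+1) (J - 2^n + 1) hj pq1 (ε (J - 2^n + 1) + 1) hq2
                (by rw [if_neg (by omega)]),
              hd_snoc]
          by_cases hmid : (J - 2^n) + 1 = 2^(n-1)
          · have e1 : (⟨J - 2^n, pq⟩ : Fin (2^n)) = ⟨2^(n-1)-1, by omega⟩ := by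
              simp only [Fin.mk.injEq]; omega
            have e2 : (⟨J - 2^n + 1, pq1⟩ : Fin (2^n)) = ⟨2^(n-1), by omega⟩ := by
              simp only [Fin.mk.injEq]; omega
            rw [e1, e2, wmid1' _, wmid2' _]
            have hdn : hammingDist (fun i : Fin n => if (i:ℕ) = n-1 then (0:ZMod 2) else 1)
                (fun i : Fin n => if (i:ℕ) = n-1 then (1:ZMod 2) else 0) = n := by
              apply hd_full; intro i; by_cases hi : (i:ℕ) = n-1 <;> simp [hi]
            rw [hdn, hntop]
            exact Nat.le_add_right _ _
          · have hne : ¬ (ε (J - 2^n) + 1 = ε (J - 2^n + 1) + 1) := by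
              rw [εalt _ hmid]; exact εne _
            rw [if_neg hne, hntop]
            have hw := wdist ⟨J - 2^n, pq⟩ pq1
            calc n = (n-1) + 1 := by omega
            _ ≤ _ := Nat.add_le_add_right hw 1
    · -- v 0 = 0
      rw [hv 0 0 _ hnpos 0 (Nat.zero_mod _) (by rw [if_pos hnpos, ε0]; ring), w0' _]
      funext i
      cases i using Fin.lastCases <;> simp [Fin.snoc_last, Fin.snoc_castSucc]
    · -- v (2^n - 1) = (1,...,1,0)
      simp only [Nat.add_sub_cancel]
      rw [hv (2^n - 1) (2^n - 1) _ (by omega) 0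
            (Nat.mod_eq_of_lt (by omega)) (by rw [if_pos (by omega), ε2n]; ring),
          wlast' _]
      funext i
      cases i using Fin.lastCases with
      | last => simp [Fin.snoc_last]
      | cast k =>
        have := k.isLt
        rw [Fin.snoc_castSucc, if_neg (by simp; omega)]
    · -- v (2^n) = (0,...,0,1)
      simp only [Nat.add_sub_cancel]
      rw [hv (2^n) 0 _ hnpos 1
            (Nat.mod_self _) (by rw [if_neg (by omega), ε0]; ring),
          w0' _]
      funext i
      cases i using Fin.lastCases with
      | last => simp [Fin.snoc_last]
      | cast k =>
        have := k.isLt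
        rw [Fin.snoc_castSucc, if_neg (by simp; omega)]
    · -- v (2^(n+1) - 1) = 1
      rw [hv (2^(n+1) - 1) (2^n - 1) _ (by omega) 1
            (by rw [show 2^(n+1) - 1 = 2^n + (2^n - 1) by omega, Nat.add_mod_left]
                exact Nat.mod_eq_of_lt (by omega))
            (by rw [if_neg (by omega), ε2n]; ring),
          wlast' _]
      funext i
      cases i using Fin.lastCases <;> simp [Fin.snoc_last, Fin.snoc_castSucc]
end

section
/- For the complete binary tree T_n of depth n, DL(T_n) = n. -/
/-- The complete binary tree of depth `n`: vertices are binary strings of length at most `n`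
(the root is the empty string), with `x` adjacent to `y` iff one is obtained from the other
by deleting the last bit. -/
def completeBinaryTree (n : ℕ) : SimpleGraph {l : List Bool // l.length ≤ n} where
  Adj x y := (x.val = y.val.dropLast ∧ y.val ≠ []) ∨ (y.val = x.val.dropLast ∧ x.val ≠ [])
  symm := by
    constructor
    intro x y h
    tauto
  loopless := by
    constructor
    intro x h
    rcases h with ⟨h1, h2⟩ | ⟨h1, h2⟩ <;>
    · have hlen := congrArg List.length h1
      rw [List.length_dropLast] at hlen
      have hpos : 0 < x.val.length := List.length_pos_iff.mpr h2
      omega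

/-- `G` (with `N` vertices) admits a `k`-dispersed labelling: a bijection from
`{1, ..., N}` (as `Fin N`) to the vertices with consecutive labels at distance `≥ k`. -/
def HasDispersedLabellingN {V : Type*} (G : SimpleGraph V) (N k : ℕ) : Prop :=
  ∃ φ : Fin N ≃ V, ∀ i j : Fin N, (j : ℕ) = (i : ℕ) + 1 → k ≤ G.dist (φ i) (φ j)

/-- `DL` of a graph with `N` vertices. -/
noncomputable def DLn {V : Type*} (G : SimpleGraph V) (N : ℕ) : ℕ :=
  sSup {k | HasDispersedLabellingN G N k}

namespace DLCBT


/-- value of a binary string, MSB first -/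
def v : List Bool → ℕ := List.foldl (fun a b => 2 * a + b.toNat) 0

lemma foldl_v (a : ℕ) (l : List Bool) :
    List.foldl (fun a b => 2 * a + b.toNat) a l = a * 2 ^ l.length + v l := by
  induction l generalizing a with
  | nil => simp [v]
  | cons b l ih =>
    show List.foldl _ (2 * a + b.toNat) l = _
    rw [ih]
    show _ = a * 2 ^ (l.length + 1) + v (b :: l)
    have : v (b :: l) = List.foldl (fun a b => 2 * a + b.toNat) (2 * 0 + b.toNat) l := rfl
    rw [this, ih]
    ring

lemma v_cons (b : Bool) (l : List Bool) : v (b :: l) = b.toNat * 2 ^ l.length + v l := by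
  show List.foldl _ (2 * 0 + b.toNat) l = _
  rw [foldl_v]; ring

lemma v_concat (l : List Bool) (b : Bool) : v (l ++ [b]) = 2 * v l + b.toNat := by
  simp [v, List.foldl_append]

lemma v_lt (l : List Bool) : v l < 2 ^ l.length := by
  induction l with
  | nil => simp [v]
  | cons b l ih =>
    rw [v_cons]
    have hb : b.toNat ≤ 1 := Bool.toNat_le b
    have : (2:ℕ) ^ (b :: l).length = 2 * 2 ^ l.length := by
      simp [List.length_cons]; ring
    rw [this]
    nlinarith

def toBin : ℕ → ℕ → List Bool
  | 0, _ => []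
  | (L+1), N => toBin L (N / 2) ++ [decide (N % 2 = 1)]

lemma length_toBin (L N : ℕ) : (toBin L N).length = L := by
  induction L generalizing N with
  | zero => rfl
  | succ L ih => simp [toBin, ih]

lemma v_toBin {L N : ℕ} (h : N < 2 ^ L) : v (toBin L N) = N := by
  induction L generalizing N with
  | zero => interval_cases N; rfl
  | succ L ih =>
    have h2 : N / 2 < 2 ^ L := by
      have : (2:ℕ) ^ (L+1) = 2 * 2 ^ L := by ring
      omega
    rw [toBin, v_concat, ih h2]
    rcases Nat.mod_two_eq_zero_or_one N with h | h <;> simp [h] <;> omega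

lemma toBin_v (l : List Bool) : toBin l.length (v l) = l := by
  induction l using List.reverseRecOn with
  | nil => rfl
  | append_singleton l b ih =>
    rw [v_concat]
    have hlen : (l ++ [b]).length = l.length + 1 := by simp
    rw [hlen, toBin]
    have hb : b.toNat ≤ 1 := Bool.toNat_le b
    have h1 : (2 * v l + b.toNat) / 2 = v l := by omega
    have h2 : (2 * v l + b.toNat) % 2 = b.toNat := by omega
    rw [h1, h2, ih]
    cases b <;> simp


/-- potential: +length if string starts with 1, -length if it starts with 0 -/
def pot (l : List Bool) : ℤ := if 2 ^ l.length ≤ 2 * v l then (l.length : ℤ) else -(l.length : ℤ)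

lemma pot_concat (l : List Bool) (b : Bool) : |pot (l ++ [b]) - pot l| ≤ 1 := by
  have hv := v_lt l
  have hb : b.toNat ≤ 1 := Bool.toNat_le b
  rw [abs_le]
  unfold pot
  rw [v_concat]
  simp only [List.length_append, List.length_singleton]
  rcases Nat.eq_zero_or_pos l.length with h0 | hpos
  · have hl : l = [] := List.eq_nil_of_length_eq_zero h0
    subst hl
    have hv0 : v [] = 0 := rfl
    have e0 : (2:ℕ) ^ (List.length ([] : List Bool) + 1) = 2 := by norm_num
    have e0' : (2:ℕ) ^ (List.length ([] : List Bool)) = 1 := by norm_num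
    rw [e0, e0']
    split_ifs <;> simp only [List.length_nil] <;> push_cast <;> first | omega | simp
  · obtain ⟨k, hk⟩ : ∃ k, l.length = k + 1 := ⟨l.length - 1, by omega⟩
    rw [hk]
    have e1 : (2:ℕ) ^ (k + 1 + 1) = 2 * 2 ^ (k + 1) := by ring
    have e2 : (2:ℕ) ^ (k + 1) = 2 * 2 ^ k := by ring
    rw [hk] at hv
    split_ifs <;> constructor <;> push_cast <;> omega

lemma walk_pot {V : Type*} {G : SimpleGraph V} {f : V → ℤ}
    (hf : ∀ u w, G.Adj u w → |f u - f w| ≤ 1) {x y : V} (w : G.Walk x y) :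
    |f x - f y| ≤ w.length := by
  induction w with
  | nil => simp
  | @cons a b c h p ih =>
    have h1 := hf _ _ h
    have h2 : |f a - f c| ≤ |f a - f b| + |f b - f c| := abs_sub_le _ _ _
    rw [SimpleGraph.Walk.length_cons]
    push_cast
    omega

lemma dist_ge {V : Type*} {G : SimpleGraph V} {f : V → ℤ}
    (hf : ∀ u w, G.Adj u w → |f u - f w| ≤ 1) {x y : V} (hr : G.Reachable x y) :
    |f x - f y| ≤ G.dist x y := by
  obtain ⟨w, hw⟩ := hr.exists_walk_length_eq_dist
  rw [← hw]
  exact walk_pot hf w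

abbrev root (n : ℕ) : {l : List Bool // l.length ≤ n} := ⟨[], by simp⟩

lemma exists_walk_to_root (n : ℕ) : ∀ (l : List Bool) (hl : l.length ≤ n),
    ∃ w : (completeBinaryTree n).Walk ⟨l, hl⟩ (root n), w.length = l.length := by
  intro l
  induction l using List.reverseRecOn with
  | nil => exact fun hl => ⟨SimpleGraph.Walk.nil, rfl⟩
  | append_singleton l b ih =>
    intro hl
    have hl' : l.length ≤ n := by simp at hl; omega
    have hadj : (completeBinaryTree n).Adj ⟨l ++ [b], hl⟩ ⟨l, hl'⟩ :=
      Or.inr ⟨by simp, by simp⟩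
    obtain ⟨w, hw⟩ := ih hl'
    exact ⟨SimpleGraph.Walk.cons hadj w, by simp [hw]⟩

lemma reachable_root (n : ℕ) (x : {l : List Bool // l.length ≤ n}) :
    (completeBinaryTree n).Reachable x (root n) := by
  obtain ⟨w, _⟩ := exists_walk_to_root n x.val x.prop
  exact ⟨w⟩

lemma reachable_all (n : ℕ) (x y : {l : List Bool // l.length ≤ n}) :
    (completeBinaryTree n).Reachable x y :=
  (reachable_root n x).trans (reachable_root n y).symm

lemma dist_root_le (n : ℕ) (x : {l : List Bool // l.length ≤ n}) :
    (completeBinaryTree n).dist x (root n) ≤ n := by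
  obtain ⟨w, hw⟩ := exists_walk_to_root n x.val x.prop
  have h : (completeBinaryTree n).dist x (root n) ≤ w.length := SimpleGraph.dist_le w
  have := x.prop
  omega
  

def psi (n t : ℕ) : List Bool :=
  if t % 2 = 1 then toBin (Nat.size (t / 2)) (t / 2)
  else if t ≤ 2 ^ n then toBin n ((t - 2) / 2)
  else toBin (Nat.size ((t - 2 ^ n) / 2)) ((t - 2 ^ n) / 2 - 2 ^ (Nat.size ((t - 2 ^ n) / 2) - 1))

def lab (n : ℕ) : List Bool → ℕ
  | [] => 1
  | (true :: l) => 2 * v (true :: l) + 1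
  | (false :: l) => if l.length + 1 = n then 2 * v (false :: l) + 2
                    else 2 * v (false :: l) + 2 ^ n + 2 ^ (l.length + 1)

lemma lab_nil (n : ℕ) : lab n [] = 1 := rfl
lemma lab_true (n : ℕ) (l : List Bool) : lab n (true :: l) = 2 * v (true :: l) + 1 := rfl
lemma lab_false (n : ℕ) (l : List Bool) : lab n (false :: l) =
    if l.length + 1 = n then 2 * v (false :: l) + 2
    else 2 * v (false :: l) + 2 ^ n + 2 ^ (l.length + 1) := rfl

lemma v_false_cons (l : List Bool) : v (false :: l) = v l := by
  rw [v_cons]; simp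

lemma v_true_cons (l : List Bool) : v (true :: l) = 2 ^ l.length + v l := by
  rw [v_cons]; simp

lemma toBin_eq_true_cons {L N : ℕ} (hL : 1 ≤ L) (hN : N < 2 ^ L) (h : 2 ^ (L - 1) ≤ N) :
    ∃ l', toBin L N = true :: l' := by
  have hne : toBin L N ≠ [] := by
    intro hc
    have := length_toBin L N
    rw [hc] at this
    simp at this
    omega
  obtain ⟨b, l', hl⟩ := List.exists_cons_of_ne_nil hne
  have hlen : l'.length = L - 1 := by
    have := length_toBin L N
    rw [hl] at this
    simp at this
    omega
  have hv : v (b :: l') = N := by rw [← hl]; exact v_toBin hN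
  cases b
  · exfalso
    rw [v_false_cons] at hv
    have := v_lt l'
    rw [hlen] at this
    omega
  · exact ⟨l', hl⟩

lemma toBin_eq_false_cons {L N : ℕ} (hL : 1 ≤ L) (h : N < 2 ^ (L - 1)) :
    ∃ l', toBin L N = false :: l' := by
  have e : (2:ℕ) ^ L = 2 * 2 ^ (L - 1) := by
    obtain ⟨k, rfl⟩ : ∃ k, L = k + 1 := ⟨L - 1, by omega⟩
    simp [pow_succ]; ring
  have hN : N < 2 ^ L := by omega
  have hne : toBin L N ≠ [] := by
    intro hc
    have := length_toBin L N
    rw [hc] at this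
    simp at this
    omega
  obtain ⟨b, l', hl⟩ := List.exists_cons_of_ne_nil hne
  have hlen : l'.length = L - 1 := by
    have := length_toBin L N
    rw [hl] at this
    simp at this
    omega
  have hv : v (b :: l') = N := by rw [← hl]; exact v_toBin hN
  cases b
  · exact ⟨l', hl⟩
  · exfalso
    rw [v_true_cons, hlen] at hv
    omega

lemma size_eq_of {k m : ℕ} (h1 : 2 ^ k ≤ m) (h2 : m < 2 ^ (k + 1)) : Nat.size m = k + 1 :=
  le_antisymm (Nat.size_le.mpr h2) (Nat.lt_size.mpr h1)

lemma psi_lab {n : ℕ} (hn : 1 ≤ n) {l : List Bool} (hl : l.length ≤ n) : psi n (lab n l) = l := by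
  have e1 : (2:ℕ) ^ (n + 1) = 2 * 2 ^ n := by ring
  have e2 : (2:ℕ) ^ n = 2 * 2 ^ (n - 1) := by
    obtain ⟨k, rfl⟩ : ∃ k, n = k + 1 := ⟨n - 1, by omega⟩
    simp [pow_succ]; ring
  match l with
  | [] =>
    rw [lab_nil]
    show psi n 1 = []
    rw [psi, if_pos (by norm_num)]
    norm_num [Nat.size_zero, toBin]
  | (true :: l') =>
    rw [lab_true]
    have hvl := v_lt l'
    have hvc := v_true_cons l'
    have hsize : Nat.size (v (true :: l')) = l'.length + 1 := by
      apply size_eq_of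
      · omega
      · have : (2:ℕ) ^ (l'.length + 1) = 2 * 2 ^ l'.length := by ring
        omega
    rw [psi, if_pos (by omega)]
    have hdiv : (2 * v (true :: l') + 1) / 2 = v (true :: l') := by omega
    rw [hdiv, hsize]
    have : l'.length + 1 = (true :: l').length := rfl
    rw [this, toBin_v]
  | (false :: l') =>
    rw [lab_false]
    have hvl := v_lt l'
    have hvf := v_false_cons l'
    have hlen1 : (false :: l').length = l'.length + 1 := rfl
    by_cases hc : l'.length + 1 = n
    · rw [if_pos hc]
      have hvn : v (false :: l') < 2 ^ (n - 1) := by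
        rw [hvf]
        have h5 : l'.length = n - 1 := by omega
        rw [h5] at hvl
        omega
      rw [psi, if_neg (by omega), if_pos (by omega)]
      have hdiv : (2 * v (false :: l') + 2 - 2) / 2 = v (false :: l') := by omega
      rw [hdiv, ← hc, ← hlen1, toBin_v]
    · rw [if_neg hc]
      have hlt : l'.length + 1 < n := by omega
      have e3 : (2:ℕ) ^ (l'.length + 1) = 2 * 2 ^ l'.length := by ring
      have e4 : (2:ℕ) ^ (l'.length + 1) ≤ 2 ^ (n - 1) := Nat.pow_le_pow_right (by norm_num) (by omega)
      set t := 2 * v (false :: l') + 2 ^ n + 2 ^ (l'.length + 1) with ht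
      have hmod : ¬ t % 2 = 1 := by omega
      have hgt : ¬ t ≤ 2 ^ n := by omega
      rw [psi, if_neg hmod, if_neg hgt]
      have hs : (t - 2 ^ n) / 2 = v (false :: l') + 2 ^ l'.length := by omega
      rw [hs]
      have hsize : Nat.size (v (false :: l') + 2 ^ l'.length) = l'.length + 1 := by
        apply size_eq_of
        · omega
        · omega
      rw [hsize]
      have hsub : v (false :: l') + 2 ^ l'.length - 2 ^ (l'.length + 1 - 1) = v (false :: l') := by
        simp
      rw [hsub, ← hlen1, toBin_v]

lemma lab_psi {n : ℕ} (hn : 1 ≤ n) {t : ℕ} (ht1 : 1 ≤ t) (ht2 : t ≤ 2 ^ (n + 1) - 1) :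
    lab n (psi n t) = t := by
  have e1 : (2:ℕ) ^ (n + 1) = 2 * 2 ^ n := by ring
  have e2 : (2:ℕ) ^ n = 2 * 2 ^ (n - 1) := by
    obtain ⟨k, rfl⟩ : ∃ k, n = k + 1 := ⟨n - 1, by omega⟩
    simp [pow_succ]; ring
  by_cases hodd : t % 2 = 1
  · rw [psi, if_pos hodd]
    rcases Nat.eq_zero_or_pos (t / 2) with h0 | hpos
    · rw [h0, Nat.size_zero]
      show lab n [] = t
      rw [lab_nil]; omega
    · have hL : 1 ≤ Nat.size (t / 2) := Nat.size_pos.mpr hpos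
      have hlt : t / 2 < 2 ^ Nat.size (t / 2) := Nat.lt_size_self _
      have hms : 2 ^ (Nat.size (t / 2) - 1) ≤ t / 2 := Nat.lt_size.mp (by omega)
      obtain ⟨l', hl'⟩ := toBin_eq_true_cons hL hlt hms
      rw [hl', lab_true]
      have hv : v (true :: l') = t / 2 := by rw [← hl']; exact v_toBin hlt
      rw [hv]; omega
  · by_cases hle : t ≤ 2 ^ n
    · rw [psi, if_neg hodd, if_pos hle]
      have hm2 : (t - 2) / 2 < 2 ^ (n - 1) := by omega
      obtain ⟨l', hl'⟩ := toBin_eq_false_cons hn hm2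
      rw [hl', lab_false]
      have hmn : (t - 2) / 2 < 2 ^ n := by omega
      have hv : v (false :: l') = (t - 2) / 2 := by rw [← hl']; exact v_toBin hmn
      have hlen : l'.length + 1 = n := by
        have h6 := length_toBin n ((t - 2) / 2)
        rw [hl'] at h6
        simp at h6
        omega
      rw [if_pos hlen, hv]
      omega
    · rw [psi, if_neg hodd, if_neg hle]
      set s := (t - 2 ^ n) / 2 with hsdef
      have hs1 : 1 ≤ s := by omega
      have hs2 : s < 2 ^ (n - 1) := by omega
      have hd1 : 1 ≤ Nat.size s := Nat.size_pos.mpr hs1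
      have hdn : Nat.size s ≤ n - 1 := Nat.size_le.mpr hs2
      have hlow : 2 ^ (Nat.size s - 1) ≤ s := Nat.lt_size.mp (by omega)
      have hhigh : s < 2 ^ Nat.size s := Nat.lt_size_self s
      have ed : (2:ℕ) ^ Nat.size s = 2 * 2 ^ (Nat.size s - 1) := by
        obtain ⟨d, hd⟩ : ∃ d, Nat.size s = d + 1 := ⟨Nat.size s - 1, by omega⟩
        rw [hd]
        simp [pow_succ]; ring
      have hN : s - 2 ^ (Nat.size s - 1) < 2 ^ (Nat.size s - 1) := by omega
      obtain ⟨l', hl'⟩ := toBin_eq_false_cons hd1 hN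
      rw [hl', lab_false]
      have hNlt : s - 2 ^ (Nat.size s - 1) < 2 ^ Nat.size s := by omega
      have hv : v (false :: l') = s - 2 ^ (Nat.size s - 1) := by rw [← hl']; exact v_toBin hNlt
      have hlen : l'.length + 1 = Nat.size s := by
        have h6 := length_toBin (Nat.size s) (s - 2 ^ (Nat.size s - 1))
        rw [hl'] at h6
        simp at h6
        omega
      have hne : l'.length + 1 ≠ n := by omega
      rw [if_neg hne, hv, hlen]
      omega

lemma psi_len {n : ℕ} (hn : 1 ≤ n) {t : ℕ} (ht1 : 1 ≤ t) (ht2 : t ≤ 2 ^ (n + 1) - 1) :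
    (psi n t).length ≤ n := by
  have e1 : (2:ℕ) ^ (n + 1) = 2 * 2 ^ n := by ring
  rw [psi]
  split_ifs with h1 h2
  · rw [length_toBin]
    exact Nat.size_le.mpr (by omega)
  · rw [length_toBin]
  · rw [length_toBin]
    have e2 : (2:ℕ) ^ n = 2 * 2 ^ (n - 1) := by
      obtain ⟨k, rfl⟩ : ∃ k, n = k + 1 := ⟨n - 1, by omega⟩
      simp [pow_succ]; ring
    have : Nat.size ((t - 2 ^ n) / 2) ≤ n - 1 := Nat.size_le.mpr (by omega)
    omega

lemma lab_range {n : ℕ} (hn : 1 ≤ n) {l : List Bool} (hl : l.length ≤ n) :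
    1 ≤ lab n l ∧ lab n l ≤ 2 ^ (n + 1) - 1 := by
  have e1 : (2:ℕ) ^ (n + 1) = 2 * 2 ^ n := by ring
  have e2 : (2:ℕ) ^ n = 2 * 2 ^ (n - 1) := by
    obtain ⟨k, rfl⟩ : ∃ k, n = k + 1 := ⟨n - 1, by omega⟩
    simp [pow_succ]; ring
  match l with
  | [] =>
    rw [lab_nil]
    have := Nat.two_pow_pos n
    omega
  | (true :: l') =>
    rw [lab_true]
    have h1 := v_lt (true :: l')
    have h2 : (2:ℕ) ^ (true :: l').length ≤ 2 ^ n := Nat.pow_le_pow_right (by norm_num) hl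
    omega
  | (false :: l') =>
    rw [lab_false, v_false_cons]
    have h1 := v_lt l'
    by_cases hc : l'.length + 1 = n
    · rw [if_pos hc]
      have h2 : (2:ℕ) ^ l'.length = 2 ^ (n - 1) := by rw [show l'.length = n - 1 by omega]
      omega
    · rw [if_neg hc]
      have hlen : l'.length + 1 < n := by
        have : (false :: l').length = l'.length + 1 := rfl
        omega
      have h3 : (2:ℕ) ^ (l'.length + 1) = 2 * 2 ^ l'.length := by ring
      have h4 : (2:ℕ) ^ (l'.length + 1 + 1) ≤ 2 ^ n := Nat.pow_le_pow_right (by norm_num) (by omega)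
      have h5 : (2:ℕ) ^ (l'.length + 1 + 1) = 2 * 2 ^ (l'.length + 1) := by ring
      omega

lemma pot_toBin {L N : ℕ} (h : N < 2 ^ L) :
    pot (toBin L N) = if 2 ^ L ≤ 2 * N then (L : ℤ) else -(L : ℤ) := by
  rw [pot, length_toBin, v_toBin h]

lemma pot_gap {n : ℕ} (hn : 1 ≤ n) {t : ℕ} (ht1 : 1 ≤ t) (ht2 : t + 1 ≤ 2 ^ (n + 1) - 1) :
    (n : ℤ) ≤ |pot (psi n t) - pot (psi n (t + 1))| := by
  have e1 : (2:ℕ) ^ (n + 1) = 2 * 2 ^ n := by ring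
  have e2 : (2:ℕ) ^ n = 2 * 2 ^ (n - 1) := by
    obtain ⟨k, rfl⟩ : ∃ k, n = k + 1 := ⟨n - 1, by omega⟩
    simp [pow_succ]; ring
  -- pot of an odd label
  have hodd_pot : ∀ u : ℕ, u % 2 = 1 → 1 ≤ u → u ≤ 2 ^ (n + 1) - 1 →
      pot (psi n u) = (Nat.size (u / 2) : ℤ) ∧
      (2 ^ n + 1 ≤ u → pot (psi n u) = (n : ℤ)) := by
    intro u hu hu1 hu2
    rw [psi, if_pos hu]
    set m := u / 2 with hm
    rcases Nat.eq_zero_or_pos m with h0 | hpos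
    · rw [h0, Nat.size_zero]
      constructor
      · show pot (toBin 0 0) = ((0:ℕ) : ℤ)
        rw [pot_toBin (by norm_num)]
        norm_num
      · intro hc
        exfalso
        have := Nat.two_pow_pos (n - 1)
        omega
    · have hlt : m < 2 ^ Nat.size m := Nat.lt_size_self _
      have hms : 2 ^ (Nat.size m - 1) ≤ m := Nat.lt_size.mp (by
        have := Nat.size_pos.mpr hpos; omega)
      have ed : (2:ℕ) ^ Nat.size m = 2 * 2 ^ (Nat.size m - 1) := by
        obtain ⟨d, hd⟩ : ∃ d, Nat.size m = d + 1 := ⟨Nat.size m - 1, by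
          have := Nat.size_pos.mpr hpos; omega⟩
        rw [hd]; simp [pow_succ]; ring
      have hp : pot (toBin (Nat.size m) m) = (Nat.size m : ℤ) := by
        rw [pot_toBin hlt, if_pos (by omega)]
      refine ⟨hp, fun hc => ?_⟩
      have hm1 : 2 ^ (n - 1) ≤ m := by omega
      have hm2 : m < 2 ^ n := by omega
      have : Nat.size m = n := by
        apply le_antisymm (Nat.size_le.mpr hm2)
        have : n - 1 < Nat.size m := Nat.lt_size.mpr hm1
        omega
      rw [hp, this]
  -- pot of an even label
  have heven_pot : ∀ u : ℕ, u % 2 = 0 → 1 ≤ u → u ≤ 2 ^ (n + 1) - 1 →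
      (pot (psi n u) ≤ 0 ∧ (u ≤ 2 ^ n → pot (psi n u) = -(n : ℤ))) := by
    intro u hu hu1 hu2
    rw [psi, if_neg (by omega)]
    by_cases hle : u ≤ 2 ^ n
    · rw [if_pos hle]
      have hm2 : (u - 2) / 2 < 2 ^ (n - 1) := by omega
      have hp : pot (toBin n ((u - 2) / 2)) = -(n : ℤ) := by
        rw [pot_toBin (by omega), if_neg (by omega)]
      exact ⟨by rw [hp]; simp, fun _ => hp⟩
    · rw [if_neg hle]
      set s := (u - 2 ^ n) / 2 with hsdef
      have hs1 : 1 ≤ s := by omega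
      have hlow : 2 ^ (Nat.size s - 1) ≤ s := Nat.lt_size.mp (by
        have := Nat.size_pos.mpr hs1; omega)
      have hhigh : s < 2 ^ Nat.size s := Nat.lt_size_self s
      have ed : (2:ℕ) ^ Nat.size s = 2 * 2 ^ (Nat.size s - 1) := by
        obtain ⟨d, hd⟩ : ∃ d, Nat.size s = d + 1 := ⟨Nat.size s - 1, by
          have := Nat.size_pos.mpr hs1; omega⟩
        rw [hd]; simp [pow_succ]; ring
      have hp : pot (toBin (Nat.size s) (s - 2 ^ (Nat.size s - 1))) = -(Nat.size s : ℤ) := by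
        rw [pot_toBin (by omega), if_neg (by omega)]
      refine ⟨by rw [hp]; simp, fun hc => by omega⟩
  by_cases hodd : t % 2 = 1
  · -- t odd, t+1 even
    obtain ⟨hp1, hp1'⟩ := hodd_pot t hodd ht1 (by omega)
    obtain ⟨hp2, hp2'⟩ := heven_pot (t + 1) (by omega) (by omega) ht2
    by_cases hle : t + 1 ≤ 2 ^ n
    · rw [hp2' hle, hp1]
      have h0 : (0:ℤ) ≤ (Nat.size (t / 2) : ℤ) := by positivity
      calc (n : ℤ) ≤ (Nat.size (t / 2) : ℤ) - (-(n : ℤ)) := by omega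
        _ ≤ |(Nat.size (t / 2) : ℤ) - (-(n : ℤ))| := le_abs_self _
    · have ht2n : 2 ^ n + 1 ≤ t := by omega
      rw [hp1' ht2n]
      calc (n : ℤ) ≤ (n : ℤ) - pot (psi n (t + 1)) := by omega
        _ ≤ |(n : ℤ) - pot (psi n (t + 1))| := le_abs_self _
  · -- t even, t+1 odd
    obtain ⟨hp1, hp1'⟩ := heven_pot t (by omega) ht1 (by omega)
    obtain ⟨hp2, hp2'⟩ := hodd_pot (t + 1) (by omega) (by omega) ht2
    by_cases hle : t ≤ 2 ^ n
    · rw [hp1' hle]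
      have h0 : (0:ℤ) ≤ (Nat.size ((t + 1) / 2) : ℤ) := by positivity
      calc (n : ℤ) ≤ pot (psi n (t + 1)) - (-(n : ℤ)) := by rw [hp2]; omega
        _ ≤ |pot (psi n (t + 1)) - (-(n : ℤ))| := le_abs_self _
        _ = |(-(n : ℤ)) - pot (psi n (t + 1))| := abs_sub_comm _ _
    · have ht2n : 2 ^ n + 1 ≤ t + 1 := by omega
      rw [hp2' ht2n]
      calc (n : ℤ) ≤ (n : ℤ) - pot (psi n t) := by omega
        _ ≤ |(n : ℤ) - pot (psi n t)| := le_abs_self _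
        _ = |pot (psi n t) - (n : ℤ)| := abs_sub_comm _ _

lemma pot_lip (l : List Bool) (h : l ≠ []) : |pot l - pot l.dropLast| ≤ 1 := by
  obtain ⟨l', b, rfl⟩ : ∃ l' b, l = l' ++ [b] :=
    ⟨l.dropLast, l.getLast h, (List.dropLast_append_getLast h).symm⟩
  rw [List.dropLast_concat]
  exact pot_concat l' b

lemma potV_lip (n : ℕ) : ∀ u w : {l : List Bool // l.length ≤ n},
    (completeBinaryTree n).Adj u w → |pot u.val - pot w.val| ≤ 1 := by
  intro u w h
  rcases h with ⟨h1, h2⟩ | ⟨h1, h2⟩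
  · rw [h1, abs_sub_comm]
    exact pot_lip w.val h2
  · rw [h1]
    exact pot_lip u.val h2

def phi (n : ℕ) (hn : 1 ≤ n) : Fin (2 ^ (n + 1) - 1) ≃ {l : List Bool // l.length ≤ n} where
  toFun i := ⟨psi n (i + 1), psi_len hn (by omega) (by have := i.isLt; omega)⟩
  invFun x := ⟨lab n x.val - 1, by
    obtain ⟨h1, h2⟩ := lab_range hn x.prop
    have := Nat.two_pow_pos n
    have e1 : (2:ℕ) ^ (n + 1) = 2 * 2 ^ n := by ring
    omega⟩
  left_inv i := by
    apply Fin.ext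
    show lab n (psi n (↑i + 1)) - 1 = ↑i
    rw [lab_psi hn (by omega) (by have := i.isLt; omega)]
    omega
  right_inv x := by
    apply Subtype.ext
    show psi n (lab n x.val - 1 + 1) = x.val
    have h := (lab_range hn x.prop).1
    rw [Nat.sub_add_cancel h]
    exact psi_lab hn x.prop

lemma hasDL {n : ℕ} (hn : 1 ≤ n) :
    HasDispersedLabellingN (completeBinaryTree n) (2 ^ (n + 1) - 1) n := by
  refine ⟨phi n hn, ?_⟩
  intro i j hij
  have hj : ((phi n hn) j).val = psi n (↑i + 1 + 1) := by
    show psi n (↑j + 1) = _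
    rw [hij]
  have hi : ((phi n hn) i).val = psi n (↑i + 1) := rfl
  have hd := dist_ge (potV_lip n) (reachable_all n ((phi n hn) i) ((phi n hn) j))
  rw [hi, hj] at hd
  have hgap := pot_gap hn (t := ↑i + 1) (by omega) (by have := j.isLt; omega)
  have h := le_trans hgap hd
  exact_mod_cast h

lemma ub {n : ℕ} (hn : 1 ≤ n) (k : ℕ)
    (hk : HasDispersedLabellingN (completeBinaryTree n) (2 ^ (n + 1) - 1) k) : k ≤ n := by
  obtain ⟨φ, hφ⟩ := hk
  have hN : 2 < 2 ^ (n + 1) - 1 := by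
    have h4 : (2:ℕ) ^ 2 ≤ 2 ^ (n + 1) := Nat.pow_le_pow_right (by norm_num) (by omega)
    norm_num at h4
    omega
  set i0 := φ.symm (root n) with hi0
  by_cases hcase : (i0 : ℕ) + 1 < 2 ^ (n + 1) - 1
  · have h := hφ i0 ⟨(i0 : ℕ) + 1, hcase⟩ rfl
    rw [Equiv.apply_symm_apply] at h
    have hd : (completeBinaryTree n).dist (root n) (φ ⟨(i0 : ℕ) + 1, hcase⟩) ≤ n := by
      rw [SimpleGraph.dist_comm]
      exact dist_root_le n _
    omega
  · have hlt := i0.isLt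
    have hpos : 1 ≤ (i0 : ℕ) := by omega
    have h := hφ ⟨(i0 : ℕ) - 1, by omega⟩ i0 (by simp; omega)
    rw [Equiv.apply_symm_apply] at h
    have hd := dist_root_le n (φ ⟨(i0 : ℕ) - 1, by omega⟩)
    omega

end DLCBT

theorem DL_completeBinaryTree (n : ℕ) (hn : 1 ≤ n) :
    DLn (completeBinaryTree n) (2 ^ (n + 1) - 1) = n := by
  have hmem := DLCBT.hasDL hn
  have hub : n ∈ upperBounds {k | HasDispersedLabellingN (completeBinaryTree n) (2 ^ (n + 1) - 1) k} :=
    fun k hk => DLCBT.ub hn k hk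
  apply le_antisymm
  · exact csSup_le ⟨n, hmem⟩ (fun k hk => DLCBT.ub hn k hk)
  · exact le_csSup ⟨n, hub⟩ hmem
end

section
/- Let G and H be finite connected graphs with |V(G)| = m and |V(H)| = n, where gcd(m,n) = 1. Then DL°(G □ H) ≥ DL°(G) + DL°(H), where G □ H is the Cartesian product. -/
open SimpleGraph

lemma walk_len_ge {V W : Type*} {G : SimpleGraph V} {H : SimpleGraph W}
    (hG : G.Connected) (hH : H.Connected) {x y : V × W}
    (p : (G.boxProd H).Walk x y) :
    G.dist x.1 y.1 + H.dist x.2 y.2 ≤ p.length := by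
  induction p with
  | nil => simp
  | @cons a b c h q ih =>
    rcases h with ⟨hA, he⟩ | ⟨hA, he⟩
    · have h1 : G.dist a.1 c.1 ≤ 1 + G.dist b.1 c.1 := by
        calc G.dist a.1 c.1 ≤ G.dist a.1 b.1 + G.dist b.1 c.1 := hG.dist_triangle
          _ ≤ 1 + G.dist b.1 c.1 := by
              have : G.dist a.1 b.1 = 1 := dist_eq_one_iff_adj.mpr hA
              omega
      have h2 : H.dist a.2 c.2 = H.dist b.2 c.2 := by rw [he]
      show _ ≤ q.length + 1
      omega
    · have h1 : H.dist a.2 c.2 ≤ 1 + H.dist b.2 c.2 := by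
        calc H.dist a.2 c.2 ≤ H.dist a.2 b.2 + H.dist b.2 c.2 := hH.dist_triangle
          _ ≤ 1 + H.dist b.2 c.2 := by
              have : H.dist a.2 b.2 = 1 := dist_eq_one_iff_adj.mpr hA
              omega
      have h2 : G.dist a.1 c.1 = G.dist b.1 c.1 := by rw [he]
      show _ ≤ q.length + 1
      omega

lemma boxProd_dist_ge {V W : Type*} {G : SimpleGraph V} {H : SimpleGraph W}
    (hG : G.Connected) (hH : H.Connected) (x y : V × W) :
    G.dist x.1 y.1 + H.dist x.2 y.2 ≤ (G.boxProd H).dist x y := by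
  obtain ⟨p, hp⟩ := ((hG.boxProd hH).exists_walk_length_eq_dist x y)
  rw [← hp]
  exact walk_len_ge hG hH p

lemma dist_lt_card {V : Type*} [Fintype V] {G : SimpleGraph V} (hG : G.Connected)
    (u v : V) : G.dist u v < Fintype.card V := by
  obtain ⟨p, hp, hl⟩ := hG.exists_path_of_dist u v
  rw [← hl]
  exact hp.length_lt

/-- `G` admits a `k`-circular-dispersed labelling. -/
def HasCircDispersedLabelling {V : Type*} [Fintype V] (G : SimpleGraph V) (k : ℕ) : Prop :=
  ∃ φ : ZMod (Fintype.card V) ≃ V,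
    ∀ i : ZMod (Fintype.card V), k ≤ G.dist (φ i) (φ (i + 1))

/-- `DL° G`: the maximum `k` such that `G` admits a `k`-circular-dispersed labelling. -/
noncomputable def DLcirc {V : Type*} [Fintype V] (G : SimpleGraph V) : ℕ :=
  sSup {k | HasCircDispersedLabelling G k}

lemma labelling_set_facts {V : Type*} [Fintype V] (G : SimpleGraph V) (hG : G.Connected) :
    HasCircDispersedLabelling G (DLcirc G) := by
  have hne : Nonempty V := hG.nonempty
  have hm : 0 < Fintype.card V := Fintype.card_pos
  haveI : NeZero (Fintype.card V) := ⟨hm.ne'⟩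
  have hzero : HasCircDispersedLabelling G 0 :=
    ⟨Fintype.equivOfCardEq (by simp), fun i => Nat.zero_le _⟩
  have hbdd : BddAbove {k | HasCircDispersedLabelling G k} := by
    refine ⟨Fintype.card V, fun k hk => ?_⟩
    obtain ⟨φ, hφ⟩ := hk
    exact le_of_lt (lt_of_le_of_lt (hφ 0) (dist_lt_card hG _ _))
  have h0 : (0:ℕ) ∈ {k | HasCircDispersedLabelling G k} := hzero
  exact Nat.sSup_mem ⟨0, h0⟩ hbdd

theorem DLcirc_boxProd {V W : Type*} [Fintype V] [Fintype W]
    (G : SimpleGraph V) (H : SimpleGraph W) (hG : G.Connected) (hH : H.Connected)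
    (hgcd : Nat.gcd (Fintype.card V) (Fintype.card W) = 1) :
    DLcirc G + DLcirc H ≤ DLcirc (SimpleGraph.boxProd G H) := by
  obtain ⟨φ, hφ⟩ := labelling_set_facts G hG
  obtain ⟨ψ, hψ⟩ := labelling_set_facts H hH
  have hcop : Nat.Coprime (Fintype.card V) (Fintype.card W) := hgcd
  have hcard : Fintype.card (V × W) = Fintype.card V * Fintype.card W := Fintype.card_prod V W
  set e : ZMod (Fintype.card (V × W)) ≃+* ZMod (Fintype.card V) × ZMod (Fintype.card W) :=
    (ZMod.ringEquivCongr hcard).trans (ZMod.chineseRemainder hcop) with he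
  have hmem : HasCircDispersedLabelling (G.boxProd H) (DLcirc G + DLcirc H) := by
    refine ⟨e.toEquiv.trans (φ.prodCongr ψ), fun i => ?_⟩
    have hstep : e (i + 1) = (( (e i).1 + 1), ((e i).2 + 1)) := by
      rw [map_add, map_one]
      rfl
    have happ : ∀ j, (e.toEquiv.trans (φ.prodCongr ψ)) j = (φ (e j).1, ψ (e j).2) :=
      fun j => rfl
    rw [happ, happ, hstep]
    calc DLcirc G + DLcirc H
        ≤ G.dist (φ (e i).1) (φ ((e i).1 + 1)) + H.dist (ψ (e i).2) (ψ ((e i).2 + 1)) :=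
          Nat.add_le_add (hφ _) (hψ _)
      _ ≤ _ := boxProd_dist_ge hG hH (φ (e i).1, ψ (e i).2) (φ ((e i).1 + 1), ψ ((e i).2 + 1))
  have hbdd : BddAbove {k | HasCircDispersedLabelling (G.boxProd H) k} := by
    refine ⟨Fintype.card (V × W), fun k hk => ?_⟩
    obtain ⟨χ, hχ⟩ := hk
    exact le_of_lt (lt_of_le_of_lt (hχ 0) (dist_lt_card (hG.boxProd hH) _ _))
  exact le_csSup hbdd hmem
end

section
/- For the path P_m with m edges: DL°(P_m) = m/2 if m ≥ 2 is even, and DL°(P_m) = (m−1)/2 if m ≥ 3 is odd. -/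
section PG

open SimpleGraph

lemma pathGraph_walk_len {n : ℕ} {u v : Fin n} (p : (pathGraph n).Walk u v) :
    Nat.dist u.val v.val ≤ p.length := by
  induction p with
  | nil => simp [Nat.dist_self]
  | @cons a b c h p ih =>
    have hab := pathGraph_adj.mp h
    have h1 : Nat.dist a.val b.val = 1 := by simp [Nat.dist]; omega
    calc Nat.dist a.val c.val ≤ Nat.dist a.val b.val + Nat.dist b.val c.val :=
          Nat.dist.triangle_inequality _ _ _
      _ ≤ 1 + p.length := by omega
      _ = (SimpleGraph.Walk.cons h p).length := by simp [Walk.length_cons]; omega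

lemma pathGraph_dist_le_aux {n : ℕ} (j : ℕ) : ∀ (u : Fin n) (hj : u.val + j < n),
    (pathGraph n).dist u ⟨u.val + j, hj⟩ ≤ j := by
  induction j with
  | zero =>
    intro u hj
    have h0 : (⟨u.val + 0, hj⟩ : Fin n) = u := by ext; simp
    rw [h0]; simp
  | succ j ih =>
    intro u hj
    have h1 : u.val + 1 < n := by omega
    have hadj : (pathGraph n).Adj u ⟨u.val + 1, h1⟩ := pathGraph_adj.mpr (Or.inl rfl)
    have := ih ⟨u.val + 1, h1⟩ (by simpa using by omega)
    calc (pathGraph n).dist u ⟨u.val + j + 1, hj⟩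
        ≤ (pathGraph n).dist u ⟨u.val + 1, h1⟩
          + (pathGraph n).dist ⟨u.val + 1, h1⟩ ⟨u.val + j + 1, hj⟩ := by
          cases n with
          | zero => exact absurd u.isLt (by omega)
          | succ k => exact (pathGraph_connected k).dist_triangle
      _ ≤ 1 + j := by
          have hle : (pathGraph n).dist u ⟨u.val + 1, h1⟩ ≤ 1 :=
            SimpleGraph.dist_le (Walk.cons hadj Walk.nil)
          have key : (pathGraph n).dist ⟨u.val + 1, h1⟩ ⟨u.val + j + 1, hj⟩ ≤ j := by
            have h2 := ih ⟨u.val + 1, h1⟩ (by simp; omega)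
            convert h2 using 2
            simp [Fin.ext_iff]; omega
          omega
      _ = j + 1 := by omega

open SimpleGraph

section Aux

lemma HasCirc_iff {V : Type*} [Fintype V] (G : SimpleGraph V) (k n : ℕ)
    (h : Fintype.card V = n) :
    HasCircDispersedLabelling G k ↔
      ∃ φ : ZMod n ≃ V, ∀ i : ZMod n, k ≤ G.dist (φ i) (φ (i + 1)) := by
  subst h; rfl

-- even case construction
lemma even_construction (c : ℕ) (hc : 1 ≤ c) :
    ∃ φ : ZMod (2 * c + 1) ≃ Fin (2 * c + 1),
      ∀ i : ZMod (2 * c + 1), c ≤ (pathGraph (2 * c + 1)).dist (φ i) (φ (i + 1)) := by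
  set n := 2 * c + 1 with hn
  have hcop : Nat.Coprime c n := by
    have h2 : n = 1 + c * 2 := by omega
    rw [h2, Nat.coprime_add_mul_left_right]
    exact Nat.coprime_one_right c
  have hu : IsUnit ((c : ℕ) : ZMod n) := (ZMod.isUnit_iff_coprime c n).mpr hcop
  let f : ZMod n → Fin n := fun i => ⟨((c : ZMod n) * i).val, ZMod.val_lt _⟩
  have hinj : Function.Injective f := by
    intro i j hij
    have := Fin.mk.injEq .. ▸ hij
    have hval : ((c : ZMod n) * i).val = ((c : ZMod n) * j).val := congrArg Fin.val hij
    exact hu.mul_left_cancel (ZMod.val_injective n hval)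
  refine ⟨Equiv.ofBijective f ((Fintype.bijective_iff_injective_and_card f).mpr ⟨hinj, by simp [ZMod.card]⟩), fun i => ?_⟩
  simp only [Equiv.ofBijective_apply]
  rw [pathGraph_dist]
  have hmul : (c : ZMod n) * (i + 1) = (c : ZMod n) * i + (c : ZMod n) := by ring
  simp only [f, hmul]
  set a := (c : ZMod n) * i
  have hx : a.val < n := ZMod.val_lt a
  have hck : ((c : ℕ) : ZMod n).val = c := ZMod.val_cast_of_lt (by omega)
  rw [ZMod.val_add, hck]
  rcases Nat.lt_or_ge (a.val + c) n with h | h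
  · rw [Nat.mod_eq_of_lt h]; simp [Nat.dist]
  · have h2 : (a.val + c) % n = a.val + c - n := by
      rw [Nat.mod_eq_sub_mod h, Nat.mod_eq_of_lt (by omega)]
    rw [h2]; simp [Nat.dist]; omega

-- odd case construction
lemma odd_construction (h : ℕ) (hh : 2 ≤ h) :
    ∃ φ : ZMod (2 * h) ≃ Fin (2 * h),
      ∀ i : ZMod (2 * h), h - 1 ≤ (pathGraph (2 * h)).dist (φ i) (φ (i + 1)) := by
  set n := 2 * h with hn
  haveI : NeZero n := ⟨by omega⟩
  let f : ZMod n → Fin n := fun i =>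
    if i.val % 2 = 0 then ⟨i.val / 2, by have := ZMod.val_lt i; omega⟩
    else ⟨i.val / 2 + h, by have := ZMod.val_lt i; omega⟩
  have hinj : Function.Injective f := by
    intro i j hij
    apply ZMod.val_injective n
    have hi := ZMod.val_lt i; have hj := ZMod.val_lt j
    simp only [f] at hij
    split_ifs at hij <;> (have := congrArg Fin.val hij; simp at this; omega)
  refine ⟨Equiv.ofBijective f ((Fintype.bijective_iff_injective_and_card f).mpr ⟨hinj, by simp [ZMod.card]⟩), fun i => ?_⟩
  simp only [Equiv.ofBijective_apply]
  rw [pathGraph_dist]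
  have hx : i.val < n := ZMod.val_lt i
  have h1 : (1 : ZMod n).val = 1 := ZMod.val_one_eq_one_mod n ▸ Nat.mod_eq_of_lt (by omega)
  have hadd : (i + 1).val = (i.val + 1) % n := by rw [ZMod.val_add, h1]
  rcases Nat.lt_or_ge (i.val + 1) n with hlt | hge
  · have hy : (i + 1).val = i.val + 1 := by rw [hadd, Nat.mod_eq_of_lt hlt]
    simp only [f, hy]
    rcases Nat.even_or_odd i.val with he | ho
    · have h2 : i.val % 2 = 0 := Nat.even_iff.mp he
      have h3 : (i.val + 1) % 2 = 1 := by omega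
      simp only [h2, h3, if_true, if_false]
      simp [Nat.dist]; omega
    · have h2 : i.val % 2 = 1 := Nat.odd_iff.mp ho
      have h3 : (i.val + 1) % 2 = 0 := by omega
      simp only [h2, h3]
      simp [Nat.dist]; omega
  · have hxe : i.val = n - 1 := by omega
    have hy : (i + 1).val = 0 := by
      rw [hadd, hxe]
      have hn1 : n - 1 + 1 = n := by omega
      rw [hn1, Nat.mod_self]
    simp only [f, hy, hxe]
    have h2 : (n - 1) % 2 = 1 := by omega
    simp only [h2]
    simp [Nat.dist]; omega

end Aux

lemma DLcirc_eq {V : Type*} [Fintype V] (G : SimpleGraph V) (K : ℕ)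
    (hach : HasCircDispersedLabelling G K)
    (hbd : ∀ k, HasCircDispersedLabelling G k → k ≤ K) : DLcirc G = K := by
  have hset : {k | HasCircDispersedLabelling G k} = Set.Iic K := by
    ext k
    constructor
    · exact fun h => hbd k h
    · intro hk
      obtain ⟨φ, hφ⟩ := hach
      exact ⟨φ, fun i => le_trans hk (hφ i)⟩
  rw [DLcirc, hset, csSup_Iic]

lemma even_bound (c k : ℕ) (hc : 1 ≤ c)
    (h : HasCircDispersedLabelling (pathGraph (2 * c + 1)) k) : k ≤ c := by
  rw [HasCirc_iff _ _ _ (Fintype.card_fin _)] at h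
  obtain ⟨φ, hφ⟩ := h
  set cv : Fin (2 * c + 1) := ⟨c, by omega⟩ with hcv
  have h1 := hφ (φ.symm cv)
  rw [Equiv.apply_symm_apply, pathGraph_dist] at h1
  have hlt := (φ (φ.symm cv + 1)).isLt
  simp only [hcv, Nat.dist] at h1
  omega

lemma odd_bound (h k : ℕ) (hh : 2 ≤ h)
    (hb : HasCircDispersedLabelling (pathGraph (2 * h)) k) : k ≤ h - 1 := by
  rw [HasCirc_iff _ _ _ (Fintype.card_fin _)] at hb
  obtain ⟨φ, hφ⟩ := hb
  by_contra hk
  push_neg at hk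
  have hkh : h ≤ k := by omega
  set cv : Fin (2 * h) := ⟨h - 1, by omega⟩ with hcv
  have h1 := hφ (φ.symm cv)
  have h2 := hφ (φ.symm cv - 1)
  rw [sub_add_cancel] at h2
  rw [Equiv.apply_symm_apply] at h1 h2
  rw [pathGraph_dist] at h1 h2
  have hv : cv.val = h - 1 := rfl
  have e1 : (φ (φ.symm cv + 1)).val = 2 * h - 1 := by
    have hlt := (φ (φ.symm cv + 1)).isLt
    rw [hv] at h1
    simp only [Nat.dist] at h1
    omega
  have e2 : (φ (φ.symm cv - 1)).val = 2 * h - 1 := by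
    have hlt := (φ (φ.symm cv - 1)).isLt
    rw [hv] at h2
    simp only [Nat.dist] at h2
    omega
  have heq : φ (φ.symm cv + 1) = φ (φ.symm cv - 1) := Fin.ext (by rw [e1, e2])
  have hii : φ.symm cv + 1 = φ.symm cv - 1 := φ.injective heq
  rw [sub_eq_add_neg] at hii
  have h12 : (1 : ZMod (2 * h)) = -1 := add_left_cancel hii
  have h20 : ((2 : ℕ) : ZMod (2 * h)) = 0 := by push_cast; linear_combination h12
  rw [ZMod.natCast_eq_zero_iff] at h20
  have := Nat.le_of_dvd (by norm_num) h20
  omega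

end PG

theorem DLcirc_pathGraph (m : ℕ) (hm : 2 ≤ m) :
    DLcirc (SimpleGraph.pathGraph (m + 1)) =
      if Even m then m / 2 else (m - 1) / 2 := by
  rcases Nat.even_or_odd m with he | ho
  · rw [if_pos he]
    obtain ⟨c, hc⟩ := he
    have hc' : m = 2 * c := by omega
    subst hc'
    have h1 : 1 ≤ c := by omega
    have hdiv : 2 * c / 2 = c := by omega
    rw [hdiv]
    refine DLcirc_eq _ _ ?_ (fun k hk => even_bound c k h1 hk)
    rw [HasCirc_iff _ _ _ (Fintype.card_fin _)]
    exact even_construction c h1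
  · rw [if_neg (Nat.not_even_iff_odd.symm.mp ho)]
    obtain ⟨c, hc⟩ := ho
    subst hc
    have h2 : 2 ≤ c + 1 := by omega
    have hrw : 2 * c + 1 + 1 = 2 * (c + 1) := by ring
    have hdiv : (2 * c + 1 - 1) / 2 = (c + 1) - 1 := by omega
    rw [hdiv, hrw]
    refine DLcirc_eq _ _ ?_ (fun k hk => odd_bound (c + 1) k h2 hk)
    rw [HasCirc_iff _ _ _ (Fintype.card_fin _)]
    exact odd_construction (c + 1) h2
end

section
/- If a finite connected graph G satisfies DL°(G) = r(G), then G has no uniquely eccentric central vertex. -/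
theorem no_uniquely_eccentric_central_of_DLcirc_eq_radius
    {V : Type*} [Fintype V] (G : SimpleGraph V) (hG : G.Connected)
    (hcard : 3 ≤ Fintype.card V) (h : DLcirc G = graphRadius G) :
    ¬ ∃ v : V, eccent G v = graphRadius G ∧
        ∃! u : V, G.dist v u = eccent G v := by
  rintro ⟨v, hv, u, hu, huniq⟩
  have hn0 : 0 < Fintype.card V := by omega
  haveI : NeZero (Fintype.card V) := ⟨by omega⟩
  have hmem : HasCircDispersedLabelling G (DLcirc G) := by
    have hne : HasCircDispersedLabelling G 0 := by
      obtain ⟨e⟩ := Fintype.card_eq.mp (by simp [ZMod.card] :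
        Fintype.card (ZMod (Fintype.card V)) = Fintype.card V)
      exact ⟨e, fun i => Nat.zero_le _⟩
    have hbdd : ∀ k ∈ {k | HasCircDispersedLabelling G k},
        k ≤ Finset.univ.sup (eccent G) := by
      rintro k ⟨φ, hφ⟩
      calc k ≤ G.dist (φ 0) (φ 1) := by simpa using hφ 0
        _ ≤ eccent G (φ 0) := Finset.le_sup (Finset.mem_univ _)
        _ ≤ _ := Finset.le_sup (Finset.mem_univ _)
    exact Nat.sSup_mem ⟨0, by exact hne⟩ ⟨_, hbdd⟩
  rw [h] at hmem
  obtain ⟨φ, hφ⟩ := hmem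
  set i := φ.symm v with hi
  have hvi : φ i = v := φ.apply_symm_apply v
  have key : ∀ w, graphRadius G ≤ G.dist v w → w = u := by
    intro w hw
    have hle : G.dist v w ≤ eccent G v := Finset.le_sup (Finset.mem_univ w)
    rw [hv] at hle
    refine huniq w ?_
    rw [hv]
    omega
  have h1 : φ (i + 1) = u := key _ (by simpa [hvi] using hφ i)
  have h2 : φ (i - 1) = u := by
    refine key _ ?_
    have := hφ (i - 1)
    rw [sub_add_cancel, hvi, G.dist_comm] at this
    exact this
  have hii : (i + 1 : ZMod (Fintype.card V)) = i - 1 := φ.injective (h1.trans h2.symm)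
  have h2z : ((2 : ℕ) : ZMod (Fintype.card V)) = 0 := by
    push_cast
    linear_combination hii
  have hdvd : Fintype.card V ∣ 2 := (ZMod.natCast_eq_zero_iff 2 _).mp h2z
  have := Nat.le_of_dvd (by norm_num) hdvd
  omega
end
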